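/- arXiv:2010.15511 — 8 statements merged into one kernel-verified Lean document; each statement's English description precedes it below -/
import Mathlib

section
/- Let λ ∈ ℝ^p with 0 ≤ λ₁ ≤ ... ≤ λ_p, λ ≠ 0, and r > 0. The minimum of ∑_{i=1}^p λ_i β_i over the set B = {β : ‖β‖₂ = r, 0 ≤ β₁ ≤ ... ≤ β_p} equals the minimum over i = 1,...,p of ⟨λ, r·b_i⟩, where b_i = (0,...,0, 1/√i, ..., 1/√i) has its last i coordinates equal to 1/√i. -/
open Finset

noncomputable def bvec (p : ℕ) (i : Fin p) : Fin p → ℝ :=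
  fun j => if p ≤ (j : ℕ) + (i : ℕ) + 1 then 1 / Real.sqrt ((i : ℕ) + 1) else 0

lemma bvec_nonneg (p : ℕ) (i j : Fin p) : 0 ≤ bvec p i j := by
  unfold bvec; split <;> positivity

lemma card_cond {p : ℕ} (i : Fin p) :
    (univ.filter fun j : Fin p => p ≤ (j : ℕ) + (i : ℕ) + 1).card = (i : ℕ) + 1 := by
  have h := i.isLt
  rw [Finset.card_filter]
  rw [Fin.sum_univ_eq_sum_range (fun k => if p ≤ k + (i:ℕ) + 1 then 1 else 0)]
  rw [← Finset.card_filter]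
  have : (Finset.range p).filter (fun k => p ≤ k + (i:ℕ) + 1) = Finset.Ico (p - (i:ℕ) - 1) p := by
    ext k; simp only [Finset.mem_filter, Finset.mem_range, Finset.mem_Ico]; omega
  rw [this, Nat.card_Ico]; omega

lemma sum_sq_bvec {p : ℕ} (i : Fin p) : ∑ j, (bvec p i j) ^ 2 = 1 := by
  have h1 : (0:ℝ) < (i:ℕ) + 1 := by positivity
  have : ∑ j, (bvec p i j) ^ 2
      = ∑ j ∈ univ.filter (fun j : Fin p => p ≤ (j : ℕ) + (i : ℕ) + 1),
          (1 / Real.sqrt ((i:ℕ) + 1)) ^ 2 := by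
    rw [Finset.sum_filter]
    refine Finset.sum_congr rfl fun j _ => ?_
    unfold bvec; split <;> simp
  rw [this, Finset.sum_const, card_cond, nsmul_eq_mul, div_pow, one_pow,
    Real.sq_sqrt h1.le]
  push_cast
  field_simp

lemma sum_apply_eu (p : ℕ) (s : Finset (Fin p)) (v : Fin p → EuclideanSpace ℝ (Fin p)) (j : Fin p) :
    (∑ i ∈ s, v i) j = ∑ i ∈ s, v i j := by
  induction s using Finset.induction with
  | empty => simp
  | insert _ _ h ih => simp [Finset.sum_insert h, ih]

lemma norm_bvec {p : ℕ} (i : Fin p) (x : EuclideanSpace ℝ (Fin p))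
    (hx : ∀ j, x j = bvec p i j) : ‖x‖ = 1 := by
  rw [EuclideanSpace.norm_eq]
  simp only [Real.norm_eq_abs, sq_abs]
  rw [Finset.sum_congr rfl fun j _ => by rw [hx j], sum_sq_bvec, Real.sqrt_one]

theorem stmt2 {p : ℕ} (hp : 0 < p) (lam : Fin p → ℝ) (hmono : Monotone lam)
    (hnonneg : ∀ i, 0 ≤ lam i) (r : ℝ) (hr : 0 < r) :
    IsLeast {v : ℝ | ∃ β : Fin p → ℝ, Real.sqrt (∑ i, (β i) ^ 2) = r ∧
        Monotone β ∧ (∀ i, 0 ≤ β i) ∧ v = ∑ i, lam i * β i}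
      (Finset.univ.inf' (Finset.univ_nonempty_iff.mpr (Fin.pos_iff_nonempty.mp hp))
        fun i => ∑ j, lam j * (r * bvec p i j)) := by
  have hne : (univ : Finset (Fin p)).Nonempty :=
    Finset.univ_nonempty_iff.mpr (Fin.pos_iff_nonempty.mp hp)
  set f : Fin p → ℝ := fun i => ∑ j, lam j * (r * bvec p i j) with hf
  set m : ℝ := univ.inf' hne f with hm
  have hfnn : ∀ i, 0 ≤ f i := by
    intro i
    refine Finset.sum_nonneg fun j _ => ?_
    have := hnonneg j; have := bvec_nonneg p i j
    positivity
  have hmnn : 0 ≤ m := by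
    obtain ⟨i₁, -, h₁⟩ := Finset.exists_mem_eq_inf' hne f
    rw [hm, h₁]; exact hfnn i₁
  constructor
  · -- membership
    obtain ⟨i₀, -, hi₀⟩ := Finset.exists_mem_eq_inf' hne f
    refine ⟨fun j => r * bvec p i₀ j, ?_, ?_, ?_, ?_⟩
    · have : ∑ j, (r * bvec p i₀ j) ^ 2 = r ^ 2 := by
        simp_rw [mul_pow, ← Finset.mul_sum, sum_sq_bvec, mul_one]
      rw [this, Real.sqrt_sq hr.le]
    · intro a b hab
      have hab' : (a : ℕ) ≤ (b : ℕ) := hab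
      dsimp only
      unfold bvec
      split_ifs with h1 h2
      · exact le_refl _
      · exact absurd (by omega) h2
      · have : (0:ℝ) < Real.sqrt ((i₀:ℕ) + 1) := by positivity
        rw [mul_zero]; positivity
      · exact le_refl _
    · intro j
      have := bvec_nonneg p i₀ j; positivity
    · exact hi₀
  · -- lower bound
    rintro v ⟨β, hnorm, hβmono, hβnn, rfl⟩
    set g : ℕ → ℝ := fun k => if h : k < p then β ⟨k, h⟩ else 0 with hg
    set d : ℕ → ℝ := fun k => g k - (if k = 0 then 0 else g (k - 1)) with hd
    have htel : ∀ j : ℕ, ∑ t ∈ Finset.range (j + 1), d t = g j := by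
      intro j
      induction j with
      | zero => simp [hd]
      | succ j ih =>
        rw [Finset.sum_range_succ, ih, hd]
        simp
    have hdnn : ∀ k, k < p → 0 ≤ d k := by
      intro k hk
      rw [hd]
      dsimp only
      cases k with
      | zero => simpa [hg, hk] using hβnn ⟨0, hk⟩
      | succ t =>
        have ht : t < p := by omega
        simp only [Nat.succ_ne_zero, if_false, Nat.add_sub_cancel, hg, dif_pos hk, dif_pos ht,
          sub_nonneg]
        exact hβmono (by exact Nat.le_succ t : (⟨t, ht⟩ : Fin p) ≤ ⟨t + 1, hk⟩)
    set c : Fin p → ℝ := fun i => Real.sqrt ((i:ℕ) + 1) * d (p - 1 - (i:ℕ)) with hc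
    have hcnn : ∀ i, 0 ≤ c i := by
      intro i
      have h1 := i.isLt
      have := hdnn (p - 1 - (i:ℕ)) (by omega)
      rw [hc]; positivity
    -- pointwise decomposition
    have hkey : ∀ j : Fin p, β j = ∑ i, c i * bvec p i j := by
      intro j
      have hterm : ∀ i : Fin p, c i * bvec p i j
          = if p ≤ (j:ℕ) + (i:ℕ) + 1 then d (p - 1 - (i:ℕ)) else 0 := by
        intro i
        have h1 : (0:ℝ) < Real.sqrt ((i:ℕ) + 1) := by positivity
        rw [hc]
        unfold bvec
        split
        · field_simp
        · simp
      rw [Finset.sum_congr rfl fun i _ => hterm i]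
      have hrev : ∑ i : Fin p, (if p ≤ (j:ℕ) + (i:ℕ) + 1 then d (p - 1 - (i:ℕ)) else 0)
          = ∑ i : Fin p, (if (i:ℕ) ≤ (j:ℕ) then d (i:ℕ) else 0) := by
        rw [← Fintype.sum_equiv (Fin.revPerm) _
          (fun i => if p ≤ (j:ℕ) + (i:ℕ) + 1 then d (p - 1 - (i:ℕ)) else 0) (fun i => rfl)]
        refine Finset.sum_congr rfl fun i _ => ?_
        have h1 := i.isLt
        simp only [Fin.revPerm_apply, Fin.val_rev]
        have h3 : p - 1 - (p - ((i:ℕ) + 1)) = (i:ℕ) := by omega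
        rw [h3]
        by_cases hcase : (i:ℕ) ≤ (j:ℕ)
        · rw [if_pos (by omega), if_pos hcase]
        · rw [if_neg (by omega), if_neg hcase]
      rw [hrev]
      rw [Fin.sum_univ_eq_sum_range (fun k => if k ≤ (j:ℕ) then d k else 0)]
      rw [← Finset.sum_filter]
      have hfil : (Finset.range p).filter (fun k => k ≤ (j:ℕ)) = Finset.range ((j:ℕ) + 1) := by
        have := j.isLt
        ext k; simp only [Finset.mem_filter, Finset.mem_range]; omega
      rw [hfil, htel, hg]
      simp [j.isLt]
    -- sum of c is at least r
    have hsumc : r ≤ ∑ i, c i := by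
      set x : EuclideanSpace ℝ (Fin p) := WithLp.toLp 2 β with hx
      set bv : Fin p → EuclideanSpace ℝ (Fin p) := fun i => WithLp.toLp 2 (bvec p i) with hbv
      have hβnorm : ‖x‖ = r := by
        rw [EuclideanSpace.norm_eq]
        simp only [Real.norm_eq_abs, sq_abs]
        exact hnorm
      have hxeq : x = ∑ i, c i • bv i := by
        ext j
        rw [sum_apply_eu]
        exact hkey j
      calc r = ‖x‖ := hβnorm.symm
        _ = ‖∑ i, c i • bv i‖ := by rw [hxeq]
        _ ≤ ∑ i, ‖c i • bv i‖ := norm_sum_le _ _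
        _ = ∑ i, c i := by
            refine Finset.sum_congr rfl fun i _ => ?_
            rw [norm_smul, norm_bvec i (bv i) (fun j => rfl), mul_one, Real.norm_eq_abs,
              abs_of_nonneg (hcnn i)]
    -- main computation
    have hmain : r * ∑ i, lam i * β i = ∑ k, c k * f k := by
      rw [Finset.mul_sum]
      have h1 : ∀ i : Fin p, r * (lam i * β i) = ∑ k, r * (lam i * (c k * bvec p k i)) := by
        intro i
        rw [hkey i, Finset.mul_sum, Finset.mul_sum]
      rw [Finset.sum_congr rfl fun i _ => h1 i, Finset.sum_comm]
      refine Finset.sum_congr rfl fun k _ => ?_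
      rw [hf]
      simp only
      rw [Finset.mul_sum]
      exact Finset.sum_congr rfl fun i _ => by ring
    have hstep : m * r ≤ r * ∑ i, lam i * β i := by
      rw [hmain]
      refine (mul_le_mul_of_nonneg_left hsumc hmnn).trans ?_
      rw [Finset.mul_sum]
      refine Finset.sum_le_sum fun i _ => ?_
      calc m * c i = c i * m := mul_comm _ _
        _ ≤ c i * f i := mul_le_mul_of_nonneg_left (Finset.inf'_le f (Finset.mem_univ i)) (hcnn i)
    have hfin : m * r ≤ (∑ i, lam i * β i) * r := by
      rw [mul_comm (∑ i, lam i * β i) r]; exact hstep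
    exact le_of_mul_le_mul_right hfin hr
end

section
/- Define ρ_p = √(∑_{i=1}^p (√i − √(i−1))²). For any nondecreasing nonnegative weight vector λ ≠ 0 and any r > 0, the ratio (max_{‖β‖=r} ∑ λ_i |β|_(i)) / (min_{‖β‖=r} ∑ λ_i |β|_(i)) is at least ρ_p, with equality if and only if λ is a positive scalar multiple of the quasi-spherical OSCAR sequence λ^QS_i = √(p−i+1) − √(p−i) assigned to sorted absolute values (equivalently, weight √j − √(j−1) on the j-th largest absolute value). -/
open Finset

noncomputable def sortedAbs {p : ℕ} (β : Fin p → ℝ) : Fin p → ℝ :=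
  fun i => |β (Tuple.sort (fun j => |β j|) i)|

noncomputable def slopePen {p : ℕ} (lam β : Fin p → ℝ) : ℝ :=
  ∑ i, lam i * sortedAbs β i

noncomputable def lamQS (p : ℕ) : Fin p → ℝ :=
  fun i => Real.sqrt ((p : ℝ) - (i : ℕ)) - Real.sqrt ((p : ℝ) - (i : ℕ) - 1)

noncomputable def rho (p : ℕ) : ℝ :=
  Real.sqrt (∑ i ∈ Finset.range p, (Real.sqrt (i + 1) - Real.sqrt i) ^ 2)

/-! ### Auxiliary definitions and lemmas -/

noncomputable def dd (j : ℕ) : ℝ := Real.sqrt (j + 1) - Real.sqrt j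

lemma dd_nonneg (j : ℕ) : 0 ≤ dd j := by
  have := Real.sqrt_le_sqrt (show (j:ℝ) ≤ j + 1 by linarith)
  simp [dd]; linarith

lemma sum_dd (k : ℕ) : ∑ j ∈ range k, dd j = Real.sqrt k := by
  have := Finset.sum_range_sub (fun n : ℕ => Real.sqrt n) k
  simpa [dd] using this

lemma dd_anti (k : ℕ) : dd (k + 1) ≤ dd k := by
  have h1 : Real.sqrt k * Real.sqrt (k + 2) ≤ (k : ℝ) + 1 := by
    nlinarith [sq_nonneg (Real.sqrt k - Real.sqrt (k + 2)),
      Real.sq_sqrt (show (0:ℝ) ≤ k by positivity),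
      Real.sq_sqrt (show (0:ℝ) ≤ (k:ℝ) + 2 by positivity)]
  have h2 : Real.sqrt k + Real.sqrt (k + 2) ≤ 2 * Real.sqrt (k + 1) := by
    nlinarith [Real.sq_sqrt (show (0:ℝ) ≤ k by positivity),
      Real.sq_sqrt (show (0:ℝ) ≤ (k:ℝ) + 2 by positivity),
      Real.sq_sqrt (show (0:ℝ) ≤ (k:ℝ) + 1 by positivity),
      Real.sqrt_nonneg (k:ℝ), Real.sqrt_nonneg ((k:ℝ)+2), Real.sqrt_nonneg ((k:ℝ)+1)]
  simp only [dd]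
  have e : ((k:ℝ) + 1) + 1 = (k:ℝ) + 2 := by ring
  push_cast
  rw [e]
  linarith

lemma abel (μ t : ℕ → ℝ) (n : ℕ) :
    ∑ j ∈ range n, μ j * t j
      = (∑ k ∈ range n, (t k - t (k + 1)) * (∑ j ∈ range (k + 1), μ j))
        + t n * ∑ j ∈ range n, μ j := by
  induction n with
  | zero => simp
  | succ n ih =>
    rw [Finset.sum_range_succ, ih, Finset.sum_range_succ
      (fun k => (t k - t (k + 1)) * (∑ j ∈ range (k + 1), μ j)),
      Finset.sum_range_succ μ n]
    ring

lemma swaplem (F : ℕ → ℕ → ℝ) (p : ℕ) :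
    ∑ j ∈ range p, ∑ k ∈ Ico j p, F j k = ∑ k ∈ range p, ∑ j ∈ range (k + 1), F j k := by
  induction p with
  | zero => simp
  | succ p ih =>
    rw [Finset.sum_range_succ, Finset.sum_range_succ
      (fun k => ∑ j ∈ range (k + 1), F j k)]
    have h1 : ∀ j ∈ range p, ∑ k ∈ Ico j (p + 1), F j k = (∑ k ∈ Ico j p, F j k) + F j p := by
      intro j hj
      exact Finset.sum_Ico_succ_top (le_of_lt (mem_range.mp hj)) _
    rw [Finset.sum_congr rfl h1, Finset.sum_add_distrib, ih]
    have h2 : ∑ k ∈ Ico p (p + 1), F p k = F p p := by simp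
    rw [h2, Finset.sum_range_succ (fun j => F j p)]
    ring

lemma tele (t : ℕ → ℝ) (j p : ℕ) (h : j ≤ p) :
    ∑ k ∈ Ico j p, (t k - t (k + 1)) = t j - t p := by
  rw [Finset.sum_Ico_eq_sub _ h, Finset.sum_range_sub' t, Finset.sum_range_sub' t]
  ring

lemma L1 (p : ℕ) (μ t : ℕ → ℝ) (a : ℝ) (ha : 0 ≤ a)
    (hμ : ∀ j, 0 ≤ μ j) (ht : ∀ j, 0 ≤ t j) (hmono : ∀ k, t (k + 1) ≤ t k) (htp : t p = 0)
    (hΛ : ∀ k, k ≤ p → a * Real.sqrt k ≤ ∑ j ∈ range k, μ j) :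
    a * Real.sqrt (∑ j ∈ range p, t j ^ 2) ≤ ∑ j ∈ range p, μ j * t j := by
  clear hμ ht
  set T := Real.sqrt (∑ j ∈ range p, t j ^ 2) with hT
  set C := ∑ k ∈ range p, (t k - t (k + 1)) * Real.sqrt (k + 1) with hCdef
  have hc_nonneg : ∀ k, 0 ≤ (t k - t (k + 1)) * Real.sqrt (k + 1) := fun k =>
    mul_nonneg (by linarith [hmono k]) (Real.sqrt_nonneg _)
  have hB : a * C ≤ ∑ j ∈ range p, μ j * t j := by
    rw [abel μ t p, htp]
    have : a * C ≤ ∑ k ∈ range p, (t k - t (k + 1)) * (∑ j ∈ range (k + 1), μ j) := by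
      rw [hCdef, Finset.mul_sum]
      apply Finset.sum_le_sum
      intro k hk
      have h1 := hΛ (k + 1) (mem_range.mp hk)
      have h2 : (0:ℝ) ≤ t k - t (k + 1) := by linarith [hmono k]
      have := mul_le_mul_of_nonneg_left h1 h2
      push_cast at this ⊢
      nlinarith
    linarith
  have hTnn : 0 ≤ T := Real.sqrt_nonneg _
  have hA : T ≤ C := by
    rcases eq_or_lt_of_le hTnn with hT0 | hTpos
    · rw [← hT0]
      exact Finset.sum_nonneg fun k _ => hc_nonneg k
    · have hTsq : T ^ 2 = ∑ j ∈ range p, t j ^ 2 :=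
        Real.sq_sqrt (Finset.sum_nonneg fun j _ => sq_nonneg _)
      have key : T ^ 2 ≤ C * T := by
        rw [hTsq]
        have step1 : ∑ j ∈ range p, t j ^ 2
            = ∑ k ∈ range p, (t k - t (k + 1)) * (∑ j ∈ range (k + 1), t j) := by
          have e1 : ∀ j ∈ range p, t j ^ 2 = ∑ k ∈ Ico j p, t j * (t k - t (k + 1)) := by
            intro j hj
            rw [← Finset.mul_sum, tele t j p (le_of_lt (mem_range.mp hj)), htp]
            ring
          rw [Finset.sum_congr rfl e1, swaplem (fun j k => t j * (t k - t (k + 1)))]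
          apply Finset.sum_congr rfl
          intro k _
          rw [Finset.mul_sum]
          apply Finset.sum_congr rfl
          intro j _
          ring
        rw [step1, hCdef, Finset.sum_mul]
        apply Finset.sum_le_sum
        intro k hk
        have h2 : (0:ℝ) ≤ t k - t (k + 1) := by linarith [hmono k]
        have hcs : ∑ j ∈ range (k + 1), t j ≤ Real.sqrt (k + 1) * T := by
          have h3 : ∑ j ∈ range (k + 1), t j
              ≤ Real.sqrt (∑ j ∈ range (k + 1), (1:ℝ) ^ 2)
                * Real.sqrt (∑ j ∈ range (k + 1), t j ^ 2) := by
            have := Real.sum_mul_le_sqrt_mul_sqrt (range (k + 1)) (fun _ => (1:ℝ)) t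
            simpa using this
          have h4 : Real.sqrt (∑ j ∈ range (k + 1), (1:ℝ) ^ 2) = Real.sqrt (k + 1) := by
            simp
          have h5 : Real.sqrt (∑ j ∈ range (k + 1), t j ^ 2) ≤ T := by
            apply Real.sqrt_le_sqrt
            apply Finset.sum_le_sum_of_subset_of_nonneg
            · exact Finset.range_subset_range.mpr (mem_range.mp hk)
            · intro j _ _; exact sq_nonneg _
          calc ∑ j ∈ range (k + 1), t j ≤ _ := h3
            _ = Real.sqrt (k + 1) * Real.sqrt (∑ j ∈ range (k + 1), t j ^ 2) := by rw [h4]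
            _ ≤ Real.sqrt (k + 1) * T := mul_le_mul_of_nonneg_left h5 (Real.sqrt_nonneg _)
        calc (t k - t (k + 1)) * (∑ j ∈ range (k + 1), t j)
            ≤ (t k - t (k + 1)) * (Real.sqrt (k + 1) * T) := mul_le_mul_of_nonneg_left hcs h2
          _ = (t k - t (k + 1)) * Real.sqrt (k + 1) * T := by ring
      have : T * T ≤ C * T := by nlinarith
      exact le_of_mul_le_mul_right this hTpos
  calc a * T ≤ a * C := mul_le_mul_of_nonneg_left hA ha
    _ ≤ _ := hB

lemma rho_eq (p : ℕ) : rho p = Real.sqrt (∑ j ∈ range p, dd j ^ 2) := rfl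

lemma rho_sq (p : ℕ) : rho p ^ 2 = ∑ j ∈ range p, dd j ^ 2 := by
  rw [rho_eq]; exact Real.sq_sqrt (Finset.sum_nonneg fun j _ => sq_nonneg _)

lemma rho_pos (p : ℕ) (hp : 0 < p) : 0 < rho p := by
  rw [rho_eq]
  apply Real.sqrt_pos.mpr
  apply Finset.sum_pos'
  · intro j _; exact sq_nonneg _
  · refine ⟨0, mem_range.mpr hp, ?_⟩
    have : dd 0 = 1 := by simp [dd]
    rw [this]; norm_num

lemma L3 (p : ℕ) (hp : 0 < p) (μ : ℕ → ℝ) (a : ℝ) (ha : 0 < a)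
    (hΛ : ∀ k, k ≤ p → a * Real.sqrt k ≤ ∑ j ∈ range k, μ j) :
    a * rho p ≤ Real.sqrt (∑ j ∈ range p, μ j ^ 2) ∧
      (Real.sqrt (∑ j ∈ range p, μ j ^ 2) = a * rho p ↔ ∀ j < p, μ j = a * dd j) := by
  set N := Real.sqrt (∑ j ∈ range p, μ j ^ 2) with hN
  have hNnn : 0 ≤ N := Real.sqrt_nonneg _
  have hNsq : N ^ 2 = ∑ j ∈ range p, μ j ^ 2 :=
    Real.sq_sqrt (Finset.sum_nonneg fun j _ => sq_nonneg _)
  have hρ := rho_pos p hp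
  have key : a * (∑ j ∈ range p, dd j ^ 2) ≤ ∑ j ∈ range p, μ j * dd j := by
    have h1 := abel μ dd p
    have h2 := abel dd dd p
    have h2' : ∑ j ∈ range p, dd j * dd j
        = (∑ k ∈ range p, (dd k - dd (k + 1)) * Real.sqrt (k + 1)) + dd p * Real.sqrt p := by
      rw [h2, sum_dd]
      congr 1
      apply Finset.sum_congr rfl
      intro k _
      rw [sum_dd]
      push_cast
      ring_nf
    rw [h1]
    have hstep : ∑ k ∈ range p, (dd k - dd (k + 1)) * (a * Real.sqrt (k + 1))
        ≤ ∑ k ∈ range p, (dd k - dd (k + 1)) * (∑ j ∈ range (k + 1), μ j) := by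
      apply Finset.sum_le_sum
      intro k hk
      have h3 := hΛ (k + 1) (mem_range.mp hk)
      have h4 : (0:ℝ) ≤ dd k - dd (k + 1) := by linarith [dd_anti k]
      push_cast at h3 ⊢
      nlinarith
    have hlast : a * (dd p * Real.sqrt p) ≤ dd p * ∑ j ∈ range p, μ j := by
      have h5 := hΛ p le_rfl
      nlinarith [dd_nonneg p]
    have hsum_dsq : ∑ j ∈ range p, dd j ^ 2 = ∑ j ∈ range p, dd j * dd j := by
      apply Finset.sum_congr rfl; intro j _; ring
    rw [hsum_dsq, h2', mul_add]
    have : a * ∑ k ∈ range p, (dd k - dd (k + 1)) * Real.sqrt (k + 1)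
        = ∑ k ∈ range p, (dd k - dd (k + 1)) * (a * Real.sqrt (k + 1)) := by
      rw [Finset.mul_sum]; apply Finset.sum_congr rfl; intro k _; ring
    rw [this]
    linarith [hstep, hlast]
  have hcs : ∑ j ∈ range p, μ j * dd j ≤ N * rho p := by
    have := Real.sum_mul_le_sqrt_mul_sqrt (range p) μ dd
    rw [← hN, ← rho_eq] at this
    exact this
  have hmain : a * rho p ≤ N := by
    have h6 : a * rho p * rho p ≤ N * rho p := by
      have : a * (rho p ^ 2) ≤ N * rho p := by
        rw [rho_sq]; linarith [key, hcs]
      nlinarith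
    exact le_of_mul_le_mul_right h6 hρ
  refine ⟨hmain, ?_, ?_⟩
  · intro heq
    have hz : ∑ j ∈ range p, (μ j - a * dd j) ^ 2 = 0 := by
      have hexp : ∑ j ∈ range p, (μ j - a * dd j) ^ 2
          = (∑ j ∈ range p, μ j ^ 2) - 2 * a * (∑ j ∈ range p, μ j * dd j)
            + a ^ 2 * (∑ j ∈ range p, dd j ^ 2) := by
        rw [Finset.mul_sum, Finset.mul_sum, ← Finset.sum_sub_distrib, ← Finset.sum_add_distrib]
        apply Finset.sum_congr rfl
        intro j _
        ring
      have h7 : (∑ j ∈ range p, μ j ^ 2) = a ^ 2 * rho p ^ 2 := by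
        rw [← hNsq, heq]; ring
      have h8 : 2 * a * (∑ j ∈ range p, μ j * dd j) ≥ 2 * a * (a * rho p ^ 2) := by
        have := key
        rw [← rho_sq] at this
        nlinarith
      have h9 : ∑ j ∈ range p, (μ j - a * dd j) ^ 2 ≤ 0 := by
        rw [hexp, h7, ← rho_sq]
        nlinarith
      have h10 : 0 ≤ ∑ j ∈ range p, (μ j - a * dd j) ^ 2 :=
        Finset.sum_nonneg fun j _ => sq_nonneg _
      linarith
    intro j hj
    have := (Finset.sum_eq_zero_iff_of_nonneg (fun j _ => sq_nonneg (μ j - a * dd j))).mp hz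
      j (mem_range.mpr hj)
    have := pow_eq_zero_iff (n := 2) (by norm_num) |>.mp this
    linarith [this]
  · intro hmu
    have : ∑ j ∈ range p, μ j ^ 2 = a ^ 2 * ∑ j ∈ range p, dd j ^ 2 := by
      rw [Finset.mul_sum]
      apply Finset.sum_congr rfl
      intro j hj
      rw [hmu j (mem_range.mp hj)]
      ring
    rw [hN, this, ← rho_sq, Real.sqrt_eq_iff_eq_sq] <;>
      nlinarith [hρ, ha.le, sq_nonneg (a * rho p)]

noncomputable def rv {p : ℕ} (F : Fin p → ℝ) : ℕ → ℝ :=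
  fun j => if h : j < p then F ⟨p - 1 - j, by omega⟩ else 0

noncomputable def finToNat {p : ℕ} (F : Fin p → ℝ) : ℕ → ℝ :=
  fun j => if h : j < p then F ⟨j, h⟩ else 0

lemma sum_finToNat {p : ℕ} (F : Fin p → ℝ) : ∑ j ∈ range p, finToNat F j = ∑ i, F i := by
  rw [← Fin.sum_univ_eq_sum_range (finToNat F) p]
  apply Finset.sum_congr rfl
  intro i _
  simp [finToNat, i.isLt]

lemma sum_rv {p : ℕ} (F : Fin p → ℝ) : ∑ j ∈ range p, rv F j = ∑ i, F i := by
  have h1 : ∀ j ∈ range p, rv F j = finToNat F (p - 1 - j) := by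
    intro j hj
    have hj' := mem_range.mp hj
    simp only [rv, finToNat, dif_pos hj', dif_pos (show p - 1 - j < p by omega)]
  rw [Finset.sum_congr rfl h1, Finset.sum_range_reflect (finToNat F) p, sum_finToNat]

lemma rv_mul {p : ℕ} (F G : Fin p → ℝ) (j : ℕ) :
    rv F j * rv G j = rv (fun i => F i * G i) j := by
  simp only [rv]; split <;> simp

lemma rv_sq {p : ℕ} (F : Fin p → ℝ) (j : ℕ) : rv F j ^ 2 = rv (fun i => F i ^ 2) j := by
  simp only [rv]; split <;> simp

lemma rv_nonneg {p : ℕ} (F : Fin p → ℝ) (h : ∀ i, 0 ≤ F i) (j : ℕ) : 0 ≤ rv F j := by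
  simp only [rv]; split
  · exact h _
  · exact le_rfl

lemma sortedAbs_monotone {p : ℕ} (β : Fin p → ℝ) : Monotone (sortedAbs β) :=
  Tuple.monotone_sort (fun j => |β j|)

lemma sortedAbs_nonneg {p : ℕ} (β : Fin p → ℝ) (i : Fin p) : 0 ≤ sortedAbs β i :=
  abs_nonneg _

lemma sortedAbs_sumsq {p : ℕ} (β : Fin p → ℝ) :
    ∑ i, sortedAbs β i ^ 2 = ∑ i, β i ^ 2 := by
  have h1 : ∀ i, sortedAbs β i ^ 2 = (fun k => β k ^ 2) (Tuple.sort (fun j => |β j|) i) := by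
    intro i
    simp [sortedAbs, sq_abs]
  simp only [h1]
  exact Equiv.sum_comp (Tuple.sort (fun j => |β j|)) (fun k => β k ^ 2)

lemma sortedAbs_of_monotone {p : ℕ} (s : Fin p → ℝ) (hs : Monotone s) (hnn : ∀ i, 0 ≤ s i) :
    sortedAbs s = s := by
  have habs : (fun j => |s j|) = s := funext fun j => abs_of_nonneg (hnn j)
  have h1 : sortedAbs s = s ∘ Tuple.sort s := by
    funext i
    simp only [sortedAbs, habs, Function.comp]
    rw [abs_of_nonneg (hnn _)]
  rw [h1]
  have h2 : s ∘ (Equiv.refl (Fin p) : Equiv.Perm (Fin p)) = s ∘ Tuple.sort s := by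
    apply Tuple.comp_sort_eq_comp_iff_monotone.mpr
    simpa using hs
  simpa using h2.symm

theorem stmt4 {p : ℕ} (hp : 0 < p) (lam : Fin p → ℝ) (hmono : Monotone lam)
    (hnonneg : ∀ i, 0 ≤ lam i) (hne : lam ≠ 0) (r : ℝ) (hr : 0 < r) :
    rho p ≤
      sSup {v : ℝ | ∃ β : Fin p → ℝ, Real.sqrt (∑ i, (β i) ^ 2) = r ∧ v = slopePen lam β} /
      sInf {v : ℝ | ∃ β : Fin p → ℝ, Real.sqrt (∑ i, (β i) ^ 2) = r ∧ v = slopePen lam β} ∧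
    (sSup {v : ℝ | ∃ β : Fin p → ℝ, Real.sqrt (∑ i, (β i) ^ 2) = r ∧ v = slopePen lam β} /
      sInf {v : ℝ | ∃ β : Fin p → ℝ, Real.sqrt (∑ i, (β i) ^ 2) = r ∧ v = slopePen lam β} = rho p ↔
      ∃ c : ℝ, 0 < c ∧ ∀ i, lam i = c * lamQS p i) := by
  set S := {v : ℝ | ∃ β : Fin p → ℝ, Real.sqrt (∑ i, (β i) ^ 2) = r ∧ v = slopePen lam β}
    with hSdef
  set nl := Real.sqrt (∑ i, lam i ^ 2) with hnl
  -- basic facts about lam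
  obtain ⟨i0, hi0⟩ := Function.ne_iff.mp hne
  have hi0pos : 0 < lam i0 := (hnonneg i0).lt_of_ne (Ne.symm hi0)
  have hsumsq_pos : 0 < ∑ i, lam i ^ 2 :=
    Finset.sum_pos' (fun i _ => sq_nonneg _)
      ⟨i0, mem_univ _, (sq_nonneg _).lt_of_ne (Ne.symm (pow_ne_zero 2 hi0))⟩
  have hnlpos : 0 < nl := Real.sqrt_pos.mpr hsumsq_pos
  have hnlsq : nl ^ 2 = ∑ i, lam i ^ 2 := Real.sq_sqrt hsumsq_pos.le
  have hmax : 0 < lam ⟨p - 1, by omega⟩ :=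
    lt_of_lt_of_le hi0pos (hmono (by simp [Fin.le_def]; omega))
  have slope_of_mono : ∀ s : Fin p → ℝ, Monotone s → (∀ i, 0 ≤ s i) →
      slopePen lam s = ∑ i, lam i * s i := by
    intro s h1 h2
    unfold slopePen
    rw [sortedAbs_of_monotone s h1 h2]
  have h_norm : ∀ β : Fin p → ℝ, Real.sqrt (∑ i, (β i) ^ 2) = r → ∑ i, (β i) ^ 2 = r ^ 2 := by
    intro β h
    rw [← h]
    exact (Real.sq_sqrt (Finset.sum_nonneg fun i _ => sq_nonneg _)).symm
  -- upper bound
  have h_upper : ∀ v ∈ S, v ≤ r * nl := by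
    rintro v ⟨β, hβ, rfl⟩
    have hcs := Real.sum_mul_le_sqrt_mul_sqrt univ lam (sortedAbs β)
    rw [sortedAbs_sumsq, hβ] at hcs
    calc slopePen lam β = ∑ i, lam i * sortedAbs β i := rfl
      _ ≤ nl * r := hcs
      _ = r * nl := mul_comm _ _
  -- witness attaining the sup
  have hmem_sup : r * nl ∈ S := by
    refine ⟨fun i => (r / nl) * lam i, ?_, ?_⟩
    · have h1 : ∑ i, ((r / nl) * lam i) ^ 2 = (r / nl) ^ 2 * ∑ i, lam i ^ 2 := by
        rw [Finset.mul_sum]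
        exact Finset.sum_congr rfl fun i _ => by ring
      rw [h1, ← hnlsq]
      rw [show (r / nl) ^ 2 * nl ^ 2 = r ^ 2 by field_simp]
      exact Real.sqrt_sq hr.le
    · rw [slope_of_mono _ (fun i j hij => mul_le_mul_of_nonneg_left (hmono hij)
        (div_pos hr hnlpos).le) (fun i => mul_nonneg (div_pos hr hnlpos).le (hnonneg i))]
      have h1 : ∑ i, lam i * ((r / nl) * lam i) = (r / nl) * ∑ i, lam i ^ 2 := by
        rw [Finset.mul_sum]
        exact Finset.sum_congr rfl fun i _ => by ring
      rw [h1, ← hnlsq]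
      field_simp
  have h_ne : S.Nonempty := ⟨r * nl, hmem_sup⟩
  have h_bddAbove : BddAbove S := ⟨r * nl, h_upper⟩
  have hsup : sSup S = r * nl :=
    le_antisymm (csSup_le h_ne h_upper) (le_csSup h_bddAbove hmem_sup)
  -- generic lower bound for elements
  have h_elem_ge : ∀ a : ℝ, 0 ≤ a →
      (∀ k, k ≤ p → a * Real.sqrt k ≤ ∑ j ∈ range k, rv lam j) →
      ∀ v ∈ S, a * r ≤ v := by
    rintro a ha hΛ v ⟨β, hβ, rfl⟩
    set t := rv (sortedAbs β) with htdef
    have ht_nn : ∀ j, 0 ≤ t j := rv_nonneg _ (sortedAbs_nonneg β)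
    have ht_p : t p = 0 := dif_neg (lt_irrefl p)
    have ht_mono : ∀ k, t (k + 1) ≤ t k := by
      intro k
      by_cases h1 : k + 1 < p
      · have h2 : k < p := by omega
        simp only [htdef, rv, dif_pos h1, dif_pos h2]
        exact sortedAbs_monotone β (by simp [Fin.le_def]; omega)
      · have h3 : t (k + 1) = 0 := dif_neg h1
        rw [h3]; exact ht_nn k
    have hsum_t : ∑ j ∈ range p, t j ^ 2 = r ^ 2 := by
      calc ∑ j ∈ range p, t j ^ 2
          = ∑ j ∈ range p, rv (fun i => sortedAbs β i ^ 2) j :=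
            Finset.sum_congr rfl fun j _ => rv_sq _ j
        _ = ∑ i, sortedAbs β i ^ 2 := sum_rv _
        _ = ∑ i, β i ^ 2 := sortedAbs_sumsq β
        _ = r ^ 2 := h_norm β hβ
    have hL := L1 p (rv lam) t a ha (rv_nonneg lam hnonneg) ht_nn ht_mono ht_p hΛ
    rw [hsum_t, Real.sqrt_sq hr.le] at hL
    have hpen : ∑ j ∈ range p, rv lam j * t j = slopePen lam β := by
      calc ∑ j ∈ range p, rv lam j * t j
          = ∑ j ∈ range p, rv (fun i => lam i * sortedAbs β i) j :=
            Finset.sum_congr rfl fun j _ => rv_mul _ _ j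
        _ = ∑ i, lam i * sortedAbs β i := sum_rv _
        _ = slopePen lam β := rfl
    rw [hpen] at hL
    exact hL
  have h_bddBelow : BddBelow S := by
    refine ⟨0, fun v hv => ?_⟩
    have := h_elem_ge 0 le_rfl (fun k _ => by
      rw [zero_mul]; exact Finset.sum_nonneg fun j _ => rv_nonneg lam hnonneg j) v hv
    linarith
  -- sInf is positive
  have hsp : 0 < Real.sqrt p := Real.sqrt_pos.mpr (by exact_mod_cast hp)
  have h_inf_pos : 0 < sInf S := by
    set a0 := lam ⟨p - 1, by omega⟩ / Real.sqrt p with ha0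
    have ha0pos : 0 < a0 := div_pos hmax hsp
    have hΛ0 : ∀ k, k ≤ p → a0 * Real.sqrt k ≤ ∑ j ∈ range k, rv lam j := by
      intro k hk
      rcases Nat.eq_zero_or_pos k with rfl | hk1
      · simp
      · have h1 : rv lam 0 ≤ ∑ j ∈ range k, rv lam j :=
          Finset.single_le_sum (fun j _ => rv_nonneg lam hnonneg j) (mem_range.mpr hk1)
        have h2 : rv lam 0 = lam ⟨p - 1, by omega⟩ := by
          simp only [rv, dif_pos hp]
          congr 1
        have h3 : Real.sqrt k ≤ Real.sqrt p := Real.sqrt_le_sqrt (by exact_mod_cast hk)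
        have h4 : a0 * Real.sqrt k ≤ a0 * Real.sqrt p :=
          mul_le_mul_of_nonneg_left h3 ha0pos.le
        have h5 : a0 * Real.sqrt p = lam ⟨p - 1, by omega⟩ := by
          rw [ha0]; field_simp
        linarith
    have := le_csInf h_ne (h_elem_ge a0 ha0pos.le hΛ0)
    have : 0 < a0 * r := mul_pos ha0pos hr
    linarith [le_csInf h_ne (h_elem_ge a0 ha0pos.le hΛ0)]
  -- sInf upper bounds from spread witnesses
  have h_inf_le : ∀ k, 1 ≤ k → k ≤ p →
      sInf S ≤ (r / Real.sqrt k) * ∑ j ∈ range k, rv lam j := by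
    intro k hk1 hkp
    have hsk : 0 < Real.sqrt k := Real.sqrt_pos.mpr (by exact_mod_cast hk1)
    set c := r / Real.sqrt k with hc
    have hcpos : 0 < c := div_pos hr hsk
    set βk : Fin p → ℝ := fun i => if p - k ≤ (i : ℕ) then c else 0 with hβk
    have hkmono : Monotone βk := by
      intro i j hij
      simp only [hβk]
      by_cases h1 : p - k ≤ (i : ℕ)
      · rw [if_pos h1, if_pos (le_trans h1 hij)]
      · rw [if_neg h1]
        split
        · exact hcpos.le
        · exact le_rfl
    have hknn : ∀ i, 0 ≤ βk i := fun i => by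
      simp only [hβk]; split; exacts [hcpos.le, le_rfl]
    have hksq : (k : ℝ) ≠ 0 := by positivity
    have hsumk : ∑ i, βk i ^ 2 = r ^ 2 := by
      rw [← sum_finToNat (fun i => βk i ^ 2)]
      have e2 : ∀ j ∈ range p, finToNat (fun i => βk i ^ 2) j
          = if p - k ≤ j then c ^ 2 else 0 := by
        intro j hj
        have hjp := mem_range.mp hj
        simp only [finToNat, dif_pos hjp, hβk]
        split <;> simp
      rw [Finset.sum_congr rfl e2, Finset.range_eq_Ico,
        ← Finset.sum_Ico_consecutive _ (Nat.zero_le (p - k)) (Nat.sub_le p k)]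
      have e3 : ∑ j ∈ Ico 0 (p - k), (if p - k ≤ j then c ^ 2 else 0) = 0 :=
        Finset.sum_eq_zero fun j hj => if_neg (by have := (mem_Ico.mp hj).2; omega)
      have e4 : ∑ j ∈ Ico (p - k) p, (if p - k ≤ j then c ^ 2 else 0) = k * c ^ 2 := by
        rw [Finset.sum_congr rfl (fun j hj => if_pos (mem_Ico.mp hj).1),
          Finset.sum_const, Nat.card_Ico, show p - (p - k) = k by omega]
        simp [nsmul_eq_mul]
      rw [e3, e4, zero_add, hc]
      rw [div_pow, Real.sq_sqrt (by positivity : (0:ℝ) ≤ (k:ℝ))]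
      field_simp
    have hβkr : Real.sqrt (∑ i, (βk i) ^ 2) = r := by
      rw [hsumk]; exact Real.sqrt_sq hr.le
    have hvalk : slopePen lam βk = c * ∑ j ∈ range k, rv lam j := by
      rw [slope_of_mono βk hkmono hknn]
      rw [← sum_finToNat (fun i => lam i * βk i)]
      have e2 : ∀ j ∈ range p, finToNat (fun i => lam i * βk i) j
          = if p - k ≤ j then c * finToNat lam j else 0 := by
        intro j hj
        have hjp := mem_range.mp hj
        simp only [finToNat, dif_pos hjp, hβk]
        split
        · ring
        · ring
      have e3 : ∑ j ∈ range k, rv lam j = ∑ j ∈ Ico (p - k) p, finToNat lam j := by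
        rw [Finset.sum_Ico_eq_sum_range, show p - (p - k) = k by omega,
          ← Finset.sum_range_reflect (fun j => finToNat lam (p - k + j)) k]
        apply Finset.sum_congr rfl
        intro j hj
        have hjk := mem_range.mp hj
        simp only [rv, finToNat]
        rw [dif_pos (show j < p by omega), dif_pos (show p - k + (k - 1 - j) < p by omega)]
        congr 1
        simp only [Fin.mk.injEq]
        omega
      rw [Finset.sum_congr rfl e2, e3, Finset.mul_sum, Finset.range_eq_Ico,
        ← Finset.sum_Ico_consecutive _ (Nat.zero_le (p - k)) (Nat.sub_le p k)]
      have z : ∑ j ∈ Ico 0 (p - k), (if p - k ≤ j then c * finToNat lam j else 0) = 0 :=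
        Finset.sum_eq_zero fun j hj => if_neg (by have := (mem_Ico.mp hj).2; omega)
      rw [z, zero_add]
      exact Finset.sum_congr rfl fun j hj => if_pos (mem_Ico.mp hj).1
    exact csInf_le h_bddBelow ⟨βk, hβkr, hvalk.symm⟩
  -- set up the key quantity
  set a := sInf S / r with ha_def
  have ha : 0 < a := div_pos h_inf_pos hr
  have hΛa : ∀ k, k ≤ p → a * Real.sqrt k ≤ ∑ j ∈ range k, rv lam j := by
    intro k hkp
    rcases Nat.eq_zero_or_pos k with rfl | hk1
    · simp
    · have h1 := h_inf_le k hk1 hkp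
      have hsk : 0 < Real.sqrt k := Real.sqrt_pos.mpr (by exact_mod_cast hk1)
      rw [ha_def, div_mul_eq_mul_div, div_le_iff₀ hr]
      have h2 := mul_le_mul_of_nonneg_right h1 hsk.le
      have h3 : r / Real.sqrt k * (∑ j ∈ range k, rv lam j) * Real.sqrt k
          = (∑ j ∈ range k, rv lam j) * r := by
        field_simp
      rw [h3] at h2
      linarith
  have hL3 := L3 p hp (rv lam) a ha hΛa
  have hμsq : ∑ j ∈ range p, rv lam j ^ 2 = ∑ i, lam i ^ 2 := by
    rw [Finset.sum_congr rfl fun j _ => rv_sq lam j, sum_rv]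
  rw [hμsq, ← hnl] at hL3
  have h_inf_eq : sInf S = r * a := by
    rw [ha_def]; field_simp
  have hratio : sSup S / sInf S = nl / a := by
    rw [hsup, h_inf_eq, mul_div_mul_left _ _ (ne_of_gt hr)]
  constructor
  · rw [hratio, le_div_iff₀ ha]
    nlinarith [hL3.1]
  · rw [hratio]
    constructor
    · intro heq
      have hNa : nl = a * rho p := by
        rw [div_eq_iff (ne_of_gt ha)] at heq
        rw [heq]; ring
      have hmu := hL3.2.mp hNa
      refine ⟨a, ha, ?_⟩
      intro i
      have hip := i.isLt
      have hj : p - 1 - (i : ℕ) < p := by omega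
      have h1 := hmu (p - 1 - (i : ℕ)) hj
      have h2 : rv lam (p - 1 - (i : ℕ)) = lam i := by
        simp only [rv, dif_pos hj]
        congr 1
        simp only [Fin.ext_iff]
        omega
      have h3 : dd (p - 1 - (i : ℕ)) = lamQS p i := by
        simp only [dd, lamQS]
        have e1 : ((p - 1 - (i : ℕ) : ℕ) : ℝ) = (p : ℝ) - (i : ℕ) - 1 := by
          rw [show p - 1 - (i : ℕ) = p - ((i : ℕ) + 1) by omega,
            Nat.cast_sub (by omega)]
          push_cast
          ring
        rw [e1, show (p : ℝ) - (i : ℕ) - 1 + 1 = (p : ℝ) - (i : ℕ) by ring]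
      rw [h2, h3] at h1
      exact h1
    · rintro ⟨c, hc, hlam⟩
      have hmu : ∀ j, j < p → rv lam j = c * dd j := by
        intro j hj
        simp only [rv, dif_pos hj]
        rw [hlam ⟨p - 1 - j, by omega⟩]
        congr 1
        simp only [lamQS, dd]
        have e1 : ((p : ℝ) - ((p - 1 - j : ℕ) : ℕ)) = (j : ℝ) + 1 := by
          rw [show ((p - 1 - j : ℕ) : ℝ) = ((p - (j + 1) : ℕ) : ℝ) by norm_num [show p - 1 - j = p - (j+1) by omega],
            Nat.cast_sub (by omega)]
          push_cast
          ring
        rw [show ((p:ℝ) - (((⟨p - 1 - j, by omega⟩ : Fin p) : ℕ) : ℝ)) = (j : ℝ) + 1 from e1,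
          show (j : ℝ) + 1 - 1 = (j : ℝ) by ring]
      have hΛc : ∀ k, k ≤ p → ∑ j ∈ range k, rv lam j = c * Real.sqrt k := by
        intro k hk
        rw [Finset.sum_congr rfl (fun j hj => hmu j (lt_of_lt_of_le (mem_range.mp hj) hk)),
          ← Finset.mul_sum, sum_dd]
      have hnlc : nl = c * rho p := by
        have h0 : ∑ i, lam i ^ 2 = c ^ 2 * ∑ j ∈ range p, dd j ^ 2 := by
          rw [← hμsq, Finset.mul_sum]
          exact Finset.sum_congr rfl fun j hj => by
            rw [hmu j (mem_range.mp hj)]; ring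
        rw [hnl, h0, Real.sqrt_mul (sq_nonneg c), Real.sqrt_sq hc.le, ← rho_eq]
      have h_inf_c : sInf S = r * c := by
        apply le_antisymm
        · have h1 := h_inf_le 1 le_rfl hp
          rw [hΛc 1 hp] at h1
          simpa using h1
        · have h2 := le_csInf h_ne (h_elem_ge c hc.le
            (fun k hk => le_of_eq (hΛc k hk).symm))
          linarith
      have hac : a = c := by
        rw [ha_def, h_inf_c]
        field_simp
      rw [hac, hnlc, mul_comm, mul_div_assoc, div_self (ne_of_gt hc), mul_one]
end

section
/- The SLOPE penalty J_λ(β) = ∑_{i=1}^p λ_i |β|_(i) with 0 ≤ λ₁ ≤ ... ≤ λ_p is a convex function of β; moreover, if λ₁ > 0 it is a norm on ℝ^p. -/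
open Finset

/-- Rearrangement: any permutation gives a smaller value than the sorted one. -/
lemma perm_sum_le {p : ℕ} (lam : Fin p → ℝ) (hmono : Monotone lam) (β : Fin p → ℝ)
    (σ : Equiv.Perm (Fin p)) :
    ∑ i, lam i * |β (σ i)| ≤ slopePen lam β := by
  set s := Tuple.sort (fun j => |β j|) with hs
  have hg : Monotone (sortedAbs β) := Tuple.monotone_sort (fun j => |β j|)
  have hmv : Monovary lam (sortedAbs β) := hmono.monovary hg
  have key := hmv.sum_mul_comp_perm_le_sum_mul (σ := s⁻¹ * σ)
  calc ∑ i, lam i * |β (σ i)|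
      = ∑ i, lam i * sortedAbs β ((s⁻¹ * σ) i) := by
        refine Finset.sum_congr rfl fun i _ => ?_
        simp [sortedAbs, hs]
    _ ≤ ∑ i, lam i * sortedAbs β i := key
    _ = slopePen lam β := rfl

lemma slope_smul {p : ℕ} (lam : Fin p → ℝ) (hmono : Monotone lam)
    (c : ℝ) (β : Fin p → ℝ) : slopePen lam (c • β) = |c| * slopePen lam β := by
  apply le_antisymm
  · have := perm_sum_le lam hmono β (Tuple.sort (fun j => |c • β j|))
    calc slopePen lam (c • β)
        = ∑ i, lam i * (|c| * |β (Tuple.sort (fun j => |c • β j|) i)|) := by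
          refine Finset.sum_congr rfl fun i _ => ?_
          simp [slopePen, sortedAbs, abs_mul]
      _ = |c| * ∑ i, lam i * |β (Tuple.sort (fun j => |c • β j|) i)| := by
          rw [Finset.mul_sum]
          exact Finset.sum_congr rfl fun i _ => by ring
      _ ≤ |c| * slopePen lam β := by
          exact mul_le_mul_of_nonneg_left (perm_sum_le lam hmono β _) (abs_nonneg c)
  · have h := perm_sum_le lam hmono (c • β) (Tuple.sort (fun j => |β j|))
    calc |c| * slopePen lam β
        = ∑ i, lam i * |(c • β) (Tuple.sort (fun j => |β j|) i)| := by
          rw [slopePen, Finset.mul_sum]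
          refine Finset.sum_congr rfl fun i _ => ?_
          simp [sortedAbs, abs_mul]; ring
      _ ≤ slopePen lam (c • β) := h

lemma slope_add {p : ℕ} (lam : Fin p → ℝ) (hmono : Monotone lam)
    (hnonneg : ∀ i, 0 ≤ lam i) (β γ : Fin p → ℝ) :
    slopePen lam (β + γ) ≤ slopePen lam β + slopePen lam γ := by
  set s := Tuple.sort (fun j => |(β + γ) j|)
  calc slopePen lam (β + γ)
      = ∑ i, lam i * |β (s i) + γ (s i)| := by
        refine Finset.sum_congr rfl fun i _ => ?_
        simp [slopePen, sortedAbs, s]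
    _ ≤ ∑ i, (lam i * |β (s i)| + lam i * |γ (s i)|) := by
        refine Finset.sum_le_sum fun i _ => ?_
        rw [← mul_add]
        exact mul_le_mul_of_nonneg_left (abs_add_le _ _) (hnonneg i)
    _ = (∑ i, lam i * |β (s i)|) + ∑ i, lam i * |γ (s i)| := Finset.sum_add_distrib
    _ ≤ slopePen lam β + slopePen lam γ :=
        add_le_add (perm_sum_le lam hmono β s) (perm_sum_le lam hmono γ s)

theorem stmt9 {p : ℕ} (hp : 0 < p) (lam : Fin p → ℝ) (hmono : Monotone lam)
    (hnonneg : ∀ i, 0 ≤ lam i) :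
    ConvexOn ℝ Set.univ (fun β : Fin p → ℝ => slopePen lam β) ∧
    (0 < lam ⟨0, hp⟩ →
      (∀ β : Fin p → ℝ, slopePen lam β = 0 ↔ β = 0) ∧
      (∀ (c : ℝ) (β : Fin p → ℝ), slopePen lam (c • β) = |c| * slopePen lam β) ∧
      (∀ β γ : Fin p → ℝ, slopePen lam (β + γ) ≤ slopePen lam β + slopePen lam γ)) := by
  constructor
  · refine ⟨convex_univ, fun x _ y _ a b ha hb hab => ?_⟩
    calc slopePen lam (a • x + b • y)
        ≤ slopePen lam (a • x) + slopePen lam (b • y) := slope_add lam hmono hnonneg _ _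
      _ = a * slopePen lam x + b * slopePen lam y := by
          rw [slope_smul lam hmono, slope_smul lam hmono, abs_of_nonneg ha, abs_of_nonneg hb]
  · intro hpos
    refine ⟨fun β => ?_, fun c β => slope_smul lam hmono c β, slope_add lam hmono hnonneg⟩
    constructor
    · intro h
      have hterm : ∀ i ∈ Finset.univ, lam i * sortedAbs β i = 0 := by
        rw [← Finset.sum_eq_zero_iff_of_nonneg]
        · exact h
        · exact fun i _ => mul_nonneg (hnonneg i) (abs_nonneg _)
      funext j
      have hj : ∃ i, Tuple.sort (fun k => |β k|) i = j :=
        ⟨(Tuple.sort (fun k => |β k|))⁻¹ j, by simp⟩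
      obtain ⟨i, hi⟩ := hj
      have hli : 0 < lam i := lt_of_lt_of_le hpos (hmono (Fin.mk_le_of_le_val (Nat.zero_le _)))
      have := hterm i (Finset.mem_univ i)
      have : sortedAbs β i = 0 := by
        rcases mul_eq_zero.mp this with h' | h'
        · exact absurd h' (ne_of_gt hli)
        · exact h'
      have : |β j| = 0 := by rwa [sortedAbs, hi] at this
      simpa using abs_eq_zero.mp this
    · rintro rfl
      have : ∀ i, sortedAbs (0 : Fin p → ℝ) i = 0 := fun i => by simp [sortedAbs]
      simp [slopePen, this]
end

section
/- Let f : ℝ^p → ℝ be convex and differentiable and let λ satisfy 0 ≤ λ₁ ≤ ... ≤ λ_p. Suppose β̂ ∈ ℝ^p and an ordering o of {1,...,p} sorts the vector (s_i ∇f_i(β̂)) within the level sets of |β̂| (where s_i = −sign(β̂_i) if β̂_i ≠ 0 and s_i = sign(∇f_i(β̂)) if β̂_i = 0) so that the groups of equal |β̂| are consecutive and |β̂| is nondecreasing along o. If for every group G_g with common absolute value β^G_g > 0 the equality ∑_{i∈G_g} λ_{rank(i)} = ∑_{i∈G_g} s_i ∇f_i(β̂) holds, and for every group g and every suffix of the group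 (including all suffixes of the zero group G₀) the partial tail sums satisfy ∑ λ − ∑ s∇f ≥ 0, then β̂ is a global minimizer of h(β) = f(β) + ∑_{i=1}^p λ_i |β|_(i). -/
open Finset

section auxlemmas

lemma sign_mul_self' (x : ℝ) : Real.sign x * x = |x| := by
  rcases lt_trichotomy x 0 with h | h | h
  · rw [Real.sign_of_neg h, abs_of_neg h]; ring
  · simp [h]
  · rw [Real.sign_of_pos h, abs_of_pos h]; ring

lemma sign_mul_abs' (x : ℝ) : Real.sign x * |x| = x := by
  rcases lt_trichotomy x 0 with h | h | h
  · rw [Real.sign_of_neg h, abs_of_neg h]; ring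
  · simp [h]
  · rw [Real.sign_of_pos h, abs_of_pos h]; ring

end auxlemmas
lemma abel_le (a c : ℕ → ℝ) :
    ∀ (d k n : ℕ), n = k + d →
    ∀ y : ℕ → ℝ,
    (∀ i j, k ≤ i → i ≤ j → j < n → y i ≤ y j) →
    (∀ m, k ≤ m → m < n → 0 ≤ y m) →
    (∀ j, k ≤ j → ∑ m ∈ Finset.Ico j n, a m ≤ ∑ m ∈ Finset.Ico j n, c m) →
    ∑ m ∈ Finset.Ico k n, a m * y m ≤ ∑ m ∈ Finset.Ico k n, c m * y m := by
  intro d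
  induction d with
  | zero => intro k n hn y _ _ _; simp [hn]
  | succ d ih =>
    intro k n hn y hy hy0 hac
    have hkn : k < n := by omega
    have key : ∀ g : ℕ → ℝ, ∑ m ∈ Finset.Ico k n, g m * y m
        = (∑ m ∈ Finset.Ico k n, g m * (y m - y k)) + y k * ∑ m ∈ Finset.Ico k n, g m := by
      intro g
      rw [Finset.mul_sum, ← Finset.sum_add_distrib]
      exact Finset.sum_congr rfl fun m _ => by ring
    have hdrop : ∀ g : ℕ → ℝ, ∑ m ∈ Finset.Ico k n, g m * (y m - y k)
        = ∑ m ∈ Finset.Ico (k+1) n, g m * (y m - y k) := by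
      intro g
      rw [Finset.sum_eq_sum_Ico_succ_bot hkn]
      simp
    have hIH : ∑ m ∈ Finset.Ico (k+1) n, a m * (y m - y k)
        ≤ ∑ m ∈ Finset.Ico (k+1) n, c m * (y m - y k) := by
      refine ih (k+1) n (by omega) (fun m => y m - y k) ?_ ?_ ?_
      · intro i j hi hij hj
        have := hy i j (by omega) hij hj
        linarith
      · intro m hm hmn
        have := hy k m (le_refl k) (by omega) hmn
        linarith
      · intro j hj; exact hac j (by omega)
    have htail : y k * ∑ m ∈ Finset.Ico k n, a m ≤ y k * ∑ m ∈ Finset.Ico k n, c m :=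
      mul_le_mul_of_nonneg_left (hac k le_rfl) (hy0 k le_rfl hkn)
    calc ∑ m ∈ Finset.Ico k n, a m * y m
        = (∑ m ∈ Finset.Ico (k+1) n, a m * (y m - y k)) + y k * ∑ m ∈ Finset.Ico k n, a m := by
          rw [key a, hdrop a]
      _ ≤ (∑ m ∈ Finset.Ico (k+1) n, c m * (y m - y k)) + y k * ∑ m ∈ Finset.Ico k n, c m := by
          exact add_le_add hIH htail
      _ = ∑ m ∈ Finset.Ico k n, c m * y m := by rw [← hdrop c, ← key c]
variable {α : Type*} [LinearOrder α] [DecidableEq α]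

def topk : ℕ → Finset α → Finset α
  | 0, _ => ∅
  | (m+1), C => if h : C.Nonempty then insert (C.max' h) (topk m (C.erase (C.max' h))) else ∅

lemma topk_subset : ∀ (m : ℕ) (C : Finset α), topk m C ⊆ C := by
  intro m
  induction m with
  | zero => intro C; simp [topk]
  | succ m ih =>
    intro C
    rw [topk]
    split
    · next h =>
      intro x hx
      rcases Finset.mem_insert.mp hx with h1 | h1
      · rw [h1]; exact C.max'_mem h
      · exact Finset.erase_subset _ _ (ih _ h1)
    · simp

lemma topk_card : ∀ (m : ℕ) (C : Finset α), m ≤ C.card → (topk m C).card = m := by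
  intro m
  induction m with
  | zero => intro C _; simp [topk]
  | succ m ih =>
    intro C hm
    have h : C.Nonempty := Finset.card_pos.mp (by omega)
    rw [topk, dif_pos h, Finset.card_insert_of_notMem, ih]
    · rw [Finset.card_erase_of_mem (C.max'_mem h)]; omega
    · intro hmem
      exact (Finset.notMem_erase _ _) (topk_subset _ _ hmem)

lemma topk_upclosed : ∀ (m : ℕ) (C : Finset α), ∀ q ∈ topk m C, ∀ j ∈ C, q ≤ j → j ∈ topk m C := by
  intro m
  induction m with
  | zero => intro C q hq; simp [topk] at hq
  | succ m ih =>
    intro C q hq j hj hqj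
    rw [topk] at hq ⊢
    have hC : C.Nonempty := ⟨j, hj⟩
    rw [dif_pos hC] at hq ⊢
    by_cases hjmax : j = C.max' hC
    · exact Finset.mem_insert.mpr (Or.inl hjmax)
    · rcases Finset.mem_insert.mp hq with h1 | h1
      · exfalso
        exact hjmax (le_antisymm (C.le_max' j hj) (h1 ▸ hqj))
      · refine Finset.mem_insert.mpr (Or.inr ?_)
        exact ih _ q h1 j (Finset.mem_erase.mpr ⟨hjmax, hj⟩) hqj

lemma sum_le_topk (g : α → ℝ) : ∀ (m : ℕ) (C T : Finset α), T ⊆ C → T.card = m →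
    (∀ i ∈ C, ∀ j ∈ C, i ≤ j → g i ≤ g j) →
    ∑ j ∈ T, g j ≤ ∑ j ∈ topk m C, g j := by
  intro m
  induction m with
  | zero =>
    intro C T _ hT _
    rw [Finset.card_eq_zero.mp hT]
    simp [topk]
  | succ m ih =>
    intro C T hTC hT hmono
    have hTne : T.Nonempty := Finset.card_pos.mp (by omega)
    have hCne : C.Nonempty := ⟨hTne.choose, hTC hTne.choose_spec⟩
    set cM := C.max' hCne with hcM
    set tM := T.max' hTne with htM
    have htMC : tM ∈ C := hTC (T.max'_mem hTne)
    have htMcM : tM ≤ cM := C.le_max' tM htMC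
    have hsub : T.erase tM ⊆ C.erase cM := by
      intro x hx
      rcases Finset.mem_erase.mp hx with ⟨hx1, hx2⟩
      refine Finset.mem_erase.mpr ⟨?_, hTC hx2⟩
      intro hxc
      have hcMT : cM ∈ T := hxc ▸ hx2
      have : cM ≤ tM := T.le_max' cM hcMT
      exact hx1 (by rw [hxc]; exact le_antisymm this htMcM)
    have hcard : (T.erase tM).card = m := by
      rw [Finset.card_erase_of_mem (T.max'_mem hTne)]; omega
    have hIH := ih (C.erase cM) (T.erase tM) hsub hcard
      (fun i hi j hj hij => hmono i (Finset.erase_subset _ _ hi) j (Finset.erase_subset _ _ hj) hij)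
    have hnotmem : cM ∉ topk m (C.erase cM) := fun hmem =>
      (Finset.notMem_erase _ _) (topk_subset _ _ hmem)
    rw [topk, dif_pos hCne, Finset.sum_insert hnotmem]
    have hsplit : ∑ j ∈ T, g j = g tM + ∑ j ∈ T.erase tM, g j :=
      (Finset.add_sum_erase T g (T.max'_mem hTne)).symm
    rw [hsplit]
    exact add_le_add (hmono tM htMC cM (C.max'_mem hCne) htMcM) hIH

lemma upclosed_eq {C Q₁ Q₂ : Finset α} (h₁ : Q₁ ⊆ C) (h₂ : Q₂ ⊆ C)
    (u₁ : ∀ q ∈ Q₁, ∀ j ∈ C, q ≤ j → j ∈ Q₁) (u₂ : ∀ q ∈ Q₂, ∀ j ∈ C, q ≤ j → j ∈ Q₂)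
    (hc : Q₁.card = Q₂.card) : Q₁ = Q₂ := by
  have hsub : Q₁ ⊆ Q₂ ∨ Q₂ ⊆ Q₁ := by
    by_contra h
    push_neg at h
    obtain ⟨hn1, hn2⟩ := h
    obtain ⟨q₁, hq₁, hq₁'⟩ := Finset.not_subset.mp hn1
    obtain ⟨q₂, hq₂, hq₂'⟩ := Finset.not_subset.mp hn2
    rcases le_total q₁ q₂ with hle | hle
    · exact hq₂' (u₁ q₁ hq₁ q₂ (h₂ hq₂) hle)
    · exact hq₁' (u₂ q₂ hq₂ q₁ (h₁ hq₁) hle)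
  rcases hsub with hs | hs
  · exact Finset.eq_of_subset_of_card_le hs (le_of_eq hc.symm)
  · exact (Finset.eq_of_subset_of_card_le hs (le_of_eq hc)).symm

lemma upclosed_eq_filter {C Q : Finset α} (hQC : Q ⊆ C) (hne : Q.Nonempty)
    (u : ∀ q ∈ Q, ∀ j ∈ C, q ≤ j → j ∈ Q) :
    Q = C.filter (fun j => Q.min' hne ≤ j) := by
  ext j
  simp only [Finset.mem_filter]
  constructor
  · intro hj; exact ⟨hQC hj, Q.min'_le j hj⟩
  · rintro ⟨hjC, hj⟩
    exact u (Q.min' hne) (Q.min'_mem hne) j hjC hj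
lemma filter_le_card {p : ℕ} (k : ℕ) (hk : k ≤ p) :
    (Finset.univ.filter fun j : Fin p => k ≤ j.val).card = p - k := by
  have : (Finset.univ.filter fun j : Fin p => k ≤ j.val)
      = Finset.map ⟨fun m : Fin (p - k) => (⟨k + m.val, by omega⟩ : Fin p),
          by
            intro a b hab
            simp only [Fin.mk.injEq, add_right_inj] at hab
            exact Fin.ext hab⟩ Finset.univ := by
    ext j
    simp only [Finset.mem_filter, Finset.mem_map, Finset.mem_univ, true_and,
      Function.Embedding.coeFn_mk]
    constructor
    · intro hj
      exact ⟨⟨j.val - k, by omega⟩, Fin.ext (by show k + (j.val - k) = j.val; omega)⟩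
    · rintro ⟨m, rfl⟩
      exact Nat.le_add_right k m.val
  rw [this, Finset.card_map, Finset.card_univ, Fintype.card_fin]

lemma sum_filter_eq_sum_Ico {p : ℕ} (g : Fin p → ℝ) (k : ℕ) :
    ∑ j ∈ Finset.univ.filter (fun j : Fin p => k ≤ j.val), g j
      = ∑ m ∈ Finset.Ico k p, (if h : m < p then g ⟨m, h⟩ else 0) := by
  refine Finset.sum_bij' (fun j _ => (j : Fin p).val) (fun m hm => (⟨m, (Finset.mem_Ico.mp hm).2⟩ : Fin p))
    ?_ ?_ ?_ ?_ ?_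
  · intro j hj
    simp only [Finset.mem_filter, Finset.mem_univ, true_and] at hj
    exact Finset.mem_Ico.mpr ⟨hj, j.isLt⟩
  · intro m hm
    simp only [Finset.mem_filter, Finset.mem_univ, true_and]
    exact (Finset.mem_Ico.mp hm).1
  · intro j hj; exact Fin.ext rfl
  · intro m hm; rfl
  · intro j hj
    rw [dif_pos j.isLt]
lemma lemB {p : ℕ} (lam D w : Fin p → ℝ) (hmono : Monotone lam)
    (hD : ∀ i j : Fin p, i ≤ j → w i = w j → D i ≤ D j)
    (hineq : ∀ k : Fin p,
      0 ≤ ∑ j ∈ Finset.univ.filter (fun j => k ≤ j ∧ w j = w k), (lam j - D j))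
    (S : Finset (Fin p)) :
    ∑ j ∈ S, D j ≤ ∑ j ∈ Finset.univ.filter (fun j : Fin p => p - S.card ≤ j.val), lam j := by
  classical
  set Q : ℝ → Finset (Fin p) :=
    fun v => topk (S.filter (fun j => w j = v)).card (Finset.univ.filter (fun j => w j = v))
    with hQdef
  -- fiber decomposition
  have hfib : ∑ j ∈ S, D j = ∑ v ∈ S.image w, ∑ j ∈ S.filter (fun j => w j = v), D j := by
    rw [Finset.sum_fiberwise_eq_sum_filter S (S.image w) w D]
    rw [Finset.filter_true_of_mem (fun j hj => Finset.mem_image_of_mem w hj)]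
  -- per-fiber bound
  have hstep : ∀ v ∈ S.image w,
      ∑ j ∈ S.filter (fun j => w j = v), D j ≤ ∑ j ∈ Q v, lam j := by
    intro v hv
    obtain ⟨kv, hkvS, hkvw⟩ := Finset.mem_image.mp hv
    set P := S.filter (fun j => w j = v) with hP
    set C := Finset.univ.filter (fun j : Fin p => w j = v) with hC
    have hPC : P ⊆ C := fun j hj => by
      simp only [hC, Finset.mem_filter, Finset.mem_univ, true_and]
      exact (Finset.mem_filter.mp hj).2
    have hPne : P.Nonempty := ⟨kv, Finset.mem_filter.mpr ⟨hkvS, hkvw⟩⟩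
    have hmonoC : ∀ i ∈ C, ∀ j ∈ C, i ≤ j → D i ≤ D j := by
      intro i hi j hj hij
      have hwi : w i = v := (Finset.mem_filter.mp hi).2
      have hwj : w j = v := (Finset.mem_filter.mp hj).2
      exact hD i j hij (hwi.trans hwj.symm)
    have h1 : ∑ j ∈ P, D j ≤ ∑ j ∈ Q v, D j :=
      sum_le_topk D P.card C P hPC rfl hmonoC
    have hQsub : Q v ⊆ C := topk_subset _ _
    have hQcard : (Q v).card = P.card := topk_card _ _ (Finset.card_le_card hPC)
    have hQne : (Q v).Nonempty := Finset.card_pos.mp (by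
      rw [hQcard]; exact Finset.card_pos.mpr hPne)
    set k₀ := (Q v).min' hQne with hk₀
    have hk₀C : k₀ ∈ C := hQsub ((Q v).min'_mem hQne)
    have hwk₀ : w k₀ = v := (Finset.mem_filter.mp hk₀C).2
    have hQf : Q v = C.filter (fun j => k₀ ≤ j) :=
      upclosed_eq_filter hQsub hQne (topk_upclosed _ _)
    have hset : Finset.univ.filter (fun j => k₀ ≤ j ∧ w j = w k₀) = Q v := by
      rw [hQf]
      ext j
      simp only [hC, Finset.mem_filter, Finset.mem_univ, true_and, hwk₀]
      tauto
    have h2 : ∑ j ∈ Q v, D j ≤ ∑ j ∈ Q v, lam j := by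
      have := hineq k₀
      rw [hset, Finset.sum_sub_distrib] at this
      linarith
    exact h1.trans h2
  -- disjointness
  have hdisj : (↑(S.image w) : Set ℝ).PairwiseDisjoint Q := by
    intro v hv v' hv' hvv'
    refine Finset.disjoint_left.mpr ?_
    intro j hj hj'
    have h1 : w j = v := (Finset.mem_filter.mp (topk_subset _ _ hj)).2
    have h2 : w j = v' := (Finset.mem_filter.mp (topk_subset _ _ hj')).2
    exact hvv' (h1.symm.trans h2)
  set T := (S.image w).biUnion Q with hT
  have hsum : ∑ v ∈ S.image w, ∑ j ∈ Q v, lam j = ∑ j ∈ T, lam j :=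
    (Finset.sum_biUnion hdisj).symm
  have hTcard : T.card = S.card := by
    rw [hT, Finset.card_biUnion (fun v hv v' hv' hvv' => hdisj hv hv' hvv')]
    have : ∀ v ∈ S.image w, (Q v).card = (S.filter (fun j => w j = v)).card := by
      intro v hv
      exact topk_card _ _ (Finset.card_le_card (fun j hj => by
        simp only [Finset.mem_filter, Finset.mem_univ, true_and]
        exact (Finset.mem_filter.mp hj).2))
    rw [Finset.sum_congr rfl this]
    exact (Finset.card_eq_sum_card_fiberwise
      (fun x hx => Finset.mem_image_of_mem w hx)).symm
  have hSp : S.card ≤ p := by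
    have := Finset.card_le_univ S
    simpa using this
  -- top-k bound for lam
  have hG : ∑ j ∈ T, lam j ≤
      ∑ j ∈ Finset.univ.filter (fun j : Fin p => p - T.card ≤ j.val), lam j := by
    have h1 : ∑ j ∈ T, lam j ≤ ∑ j ∈ topk T.card (Finset.univ : Finset (Fin p)), lam j :=
      sum_le_topk lam T.card Finset.univ T (Finset.subset_univ T) rfl
        (fun i _ j _ hij => hmono hij)
    have hTp : T.card ≤ p := by rw [hTcard]; exact hSp
    have h2 : topk T.card (Finset.univ : Finset (Fin p))
        = Finset.univ.filter (fun j : Fin p => p - T.card ≤ j.val) := by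
      refine upclosed_eq (topk_subset _ _) (Finset.filter_subset _ _)
        (topk_upclosed _ _) ?_ ?_
      · intro q hq j _ hqj
        simp only [Finset.mem_filter, Finset.mem_univ, true_and] at hq ⊢
        exact le_trans hq hqj
      · rw [topk_card _ _ (by simpa using hTp), filter_le_card (p - T.card) (by omega)]
        omega
    rw [← h2]; exact h1
  calc ∑ j ∈ S, D j = ∑ v ∈ S.image w, ∑ j ∈ S.filter (fun j => w j = v), D j := hfib
    _ ≤ ∑ v ∈ S.image w, ∑ j ∈ Q v, lam j := Finset.sum_le_sum hstep
    _ = ∑ j ∈ T, lam j := hsum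
    _ ≤ ∑ j ∈ Finset.univ.filter (fun j : Fin p => p - T.card ≤ j.val), lam j := hG
    _ = ∑ j ∈ Finset.univ.filter (fun j : Fin p => p - S.card ≤ j.val), lam j := by
        rw [hTcard]
lemma fderiv_expand {p : ℕ} (f : (Fin p → ℝ) → ℝ) (b v : Fin p → ℝ) :
    fderiv ℝ f b v = ∑ i, v i * fderiv ℝ f b (Pi.single i 1) := by
  have hsingle : ∀ i, (Pi.single i (v i) : Fin p → ℝ) = v i • (Pi.single i 1 : Fin p → ℝ) := by
    intro i
    ext j
    by_cases h : i = j <;> simp [Pi.single_apply, h]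
  conv_lhs => rw [← Finset.univ_sum_single v]
  rw [map_sum]
  refine Finset.sum_congr rfl fun i _ => ?_
  rw [hsingle i, map_smul, smul_eq_mul]

lemma convex_grad_le {p : ℕ} (f : (Fin p → ℝ) → ℝ) (hconv : ConvexOn ℝ Set.univ f)
    (hdiff : Differentiable ℝ f) (b β : Fin p → ℝ) :
    f b + fderiv ℝ f b (β - b) ≤ f β := by
  set L : ℝ →ᵃ[ℝ] (Fin p → ℝ) := AffineMap.lineMap b β with hL
  have hline : ConvexOn ℝ Set.univ (f ∘ L) := by
    have := hconv.comp_affineMap L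
    simpa using this
  have hd : HasDerivAt (f ∘ L) (fderiv ℝ f b (β - b)) 0 := by
    have h1 : HasDerivAt (fun t : ℝ => L t) (β - b) 0 := by
      have : (fun t : ℝ => L t) = fun t : ℝ => t • (β - b) + b := by
        funext t
        simp only [hL, AffineMap.lineMap_apply_module]
        ext j
        simp [sub_smul, one_smul]
        ring
      rw [this]
      have := ((hasDerivAt_id (0:ℝ)).smul_const (β - b)).add_const b
      simpa using this
    have h2 : HasFDerivAt f (fderiv ℝ f b) (L 0) := by
      have : L 0 = b := by simp [hL]
      rw [this]
      exact (hdiff b).hasFDerivAt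
    exact h2.comp_hasDerivAt 0 h1
  have hslope := hline.le_slope_of_hasDerivAt (Set.mem_univ (0:ℝ)) (Set.mem_univ (1:ℝ))
    zero_lt_one hd
  have hg1 : (f ∘ L) 1 = f β := by simp [hL]
  have hg0 : (f ∘ L) 0 = f b := by simp [hL]
  rw [slope_def_field, hg1, hg0] at hslope
  simp at hslope
  have hmap : fderiv ℝ f b (β - b) = fderiv ℝ f b β - fderiv ℝ f b b := map_sub _ _ _
  rw [hmap]
  linarith

theorem stmt12 {p : ℕ} (lam : Fin p → ℝ) (hmono : Monotone lam)
    (hnonneg : ∀ i, 0 ≤ lam i) (f : (Fin p → ℝ) → ℝ)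
    (hconv : ConvexOn ℝ Set.univ f) (hdiff : Differentiable ℝ f)
    (b : Fin p → ℝ) (o : Equiv.Perm (Fin p))
    (grad : Fin p → ℝ) (hgrad : ∀ i, grad i = fderiv ℝ f b (Pi.single i 1))
    (s : Fin p → ℝ)
    (hs : ∀ i, s i = if b i ≠ 0 then -Real.sign (b i) else Real.sign (grad i))
    (hosort : Monotone fun i => |b (o i)|)
    (hgsort : ∀ i j : Fin p, i ≤ j → |b (o i)| = |b (o j)| →
      s (o i) * grad (o i) ≤ s (o j) * grad (o j))
    (heq : ∀ i : Fin p, b (o i) ≠ 0 →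
      ∑ j ∈ Finset.univ.filter (fun j => |b (o j)| = |b (o i)|),
        (lam j - s (o j) * grad (o j)) = 0)
    (hineq : ∀ k : Fin p,
      0 ≤ ∑ j ∈ Finset.univ.filter (fun j => k ≤ j ∧ |b (o j)| = |b (o k)|),
        (lam j - s (o j) * grad (o j))) :
    ∀ β : Fin p → ℝ, f b + slopePen lam b ≤ f β + slopePen lam β := by
  classical
  intro β
  -- F1 : nonnegativity of D and identification with |grad|
  have habs : ∀ k : Fin p, 0 ≤ s (o k) * grad (o k) ∧ s (o k) * grad (o k) = |grad (o k)| := by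
    intro k
    by_cases hk : b (o k) = 0
    · have hsk : s (o k) = Real.sign (grad (o k)) := by rw [hs]; simp [hk]
      rw [hsk, sign_mul_self']
      exact ⟨abs_nonneg _, rfl⟩
    · -- nonzero group: first show 0 ≤ s (o k) * grad (o k)
      have hpos : 0 ≤ s (o k) * grad (o k) := by
        set C := Finset.univ.filter (fun j : Fin p => |b (o j)| = |b (o k)|) with hC
        have hkC : k ∈ C := by simp [hC]
        have hCne : C.Nonempty := ⟨k, hkC⟩
        set k₀ := C.min' hCne with hk₀def
        have hk₀C : k₀ ∈ C := C.min'_mem hCne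
        have hwk₀ : |b (o k₀)| = |b (o k)| := by
          have := Finset.mem_filter.mp hk₀C; exact this.2
        have hb₀ : b (o k₀) ≠ 0 := by
          intro h
          apply hk
          rw [h, abs_zero] at hwk₀
          exact abs_eq_zero.mp hwk₀.symm
        have hEq : ∑ j ∈ C, (lam j - s (o j) * grad (o j)) = 0 := by
          have := heq k₀ hb₀
          rw [← this]
          congr 1
          ext j
          simp [hC, hwk₀]
        have hlamD : lam k₀ ≤ s (o k₀) * grad (o k₀) := by
          by_cases hC' : (C.erase k₀).Nonempty
          · set k₁ := (C.erase k₀).min' hC' with hk₁def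
            have hk₁e : k₁ ∈ C.erase k₀ := (C.erase k₀).min'_mem hC'
            have hk₁C : k₁ ∈ C := Finset.mem_of_mem_erase hk₁e
            have hwk₁ : |b (o k₁)| = |b (o k)| := (Finset.mem_filter.mp hk₁C).2
            have hk₀k₁ : k₀ < k₁ :=
              lt_of_le_of_ne (C.min'_le k₁ hk₁C) (Finset.ne_of_mem_erase hk₁e).symm
            have hIneq := hineq k₁
            have hset : Finset.univ.filter (fun j => k₁ ≤ j ∧ |b (o j)| = |b (o k₁)|)
                = C.erase k₀ := by
              ext j
              simp only [Finset.mem_filter, Finset.mem_univ, true_and, Finset.mem_erase, hC,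
                hwk₁]
              constructor
              · rintro ⟨hle, hw⟩
                refine ⟨?_, hw⟩
                intro hjk₀
                rw [hjk₀] at hle
                exact absurd hle (not_le.mpr hk₀k₁)
              · rintro ⟨hne, hw⟩
                refine ⟨?_, hw⟩
                have hjC : j ∈ C := by simp [hC, hw]
                exact (C.erase k₀).min'_le j (Finset.mem_erase.mpr ⟨hne, hjC⟩)
            rw [hset] at hIneq
            have hsplit : ∑ j ∈ C, (lam j - s (o j) * grad (o j))
                = (lam k₀ - s (o k₀) * grad (o k₀))
                  + ∑ j ∈ C.erase k₀, (lam j - s (o j) * grad (o j)) :=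
              (Finset.add_sum_erase C _ hk₀C).symm
            rw [hsplit] at hEq
            linarith
          · have hsing : C = {k₀} := by
              have he : C.erase k₀ = ∅ := Finset.not_nonempty_iff_eq_empty.mp hC'
              ext j
              simp only [Finset.mem_singleton]
              constructor
              · intro hj
                by_contra hne
                have : j ∈ C.erase k₀ := Finset.mem_erase.mpr ⟨hne, hj⟩
                rw [he] at this
                exact absurd this (Finset.notMem_empty j)
              · rintro rfl; exact hk₀C
            rw [hsing, Finset.sum_singleton] at hEq
            linarith
        have hDk₀ : 0 ≤ s (o k₀) * grad (o k₀) := le_trans (hnonneg k₀) hlamD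
        have hk₀k : k₀ ≤ k := C.min'_le k hkC
        exact le_trans hDk₀ (hgsort k₀ k hk₀k hwk₀)
      refine ⟨hpos, ?_⟩
      have hsk : s (o k) = -Real.sign (b (o k)) := by rw [hs]; simp [hk]
      have hsabs : |s (o k)| = 1 := by
        rcases Real.sign_apply_eq_of_ne_zero (b (o k)) hk with h | h <;>
          rw [hsk, h] <;> norm_num
      have : |s (o k) * grad (o k)| = |grad (o k)| := by
        rw [abs_mul, hsabs, one_mul]
      rw [← this, abs_of_nonneg hpos]
  -- instantiate the combinatorial bound
  have hB := lemB lam (fun k => s (o k) * grad (o k)) (fun k => |b (o k)|) hmono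
      (fun i j hij hw => hgsort i j hij hw) (fun k => hineq k)
  -- F3 : slopePen at b
  have hpenb : slopePen lam b = ∑ k, lam k * |b (o k)| := by
    unfold slopePen sortedAbs
    have hcomp : (fun j => |b j|) ∘ o = (fun j => |b j|) ∘ Tuple.sort (fun j => |b j|) :=
      Tuple.comp_sort_eq_comp_iff_monotone.mpr hosort
    refine Finset.sum_congr rfl fun k _ => ?_
    have := congrFun hcomp k
    simp only [Function.comp] at this
    rw [← this]
  -- F4 : inner product with b
  have hgradb : ∑ i, grad i * b i = -∑ k, (s (o k) * grad (o k)) * |b (o k)| := by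
    rw [← Equiv.sum_comp o (fun i => grad i * b i), ← Finset.sum_neg_distrib]
    refine Finset.sum_congr rfl fun k _ => ?_
    by_cases h : b (o k) = 0
    · simp [h]
    · have hsk : s (o k) = -Real.sign (b (o k)) := by rw [hs]; simp [h]
      rw [hsk]
      have h2 : -(-Real.sign (b (o k)) * grad (o k) * |b (o k)|)
          = grad (o k) * (Real.sign (b (o k)) * |b (o k)|) := by ring
      rw [h2, sign_mul_abs']
  -- F5 : groupwise equality
  have hzero : ∑ k, (lam k - s (o k) * grad (o k)) * |b (o k)| = 0 := by
    have hf := Finset.sum_fiberwise_eq_sum_filter Finset.univ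
      (Finset.univ.image (fun k : Fin p => |b (o k)|)) (fun k => |b (o k)|)
      (fun k => (lam k - s (o k) * grad (o k)) * |b (o k)|)
    rw [Finset.filter_true_of_mem
      (fun j _ => Finset.mem_image_of_mem _ (Finset.mem_univ j))] at hf
    rw [← hf]
    apply Finset.sum_eq_zero
    intro v hv
    obtain ⟨kv, _, hkv⟩ := Finset.mem_image.mp hv
    by_cases hv0 : v = 0
    · apply Finset.sum_eq_zero
      intro j hj
      have : |b (o j)| = v := (Finset.mem_filter.mp hj).2
      rw [this, hv0, mul_zero]
    · have hbkv : b (o kv) ≠ 0 := by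
        intro h; apply hv0; rw [← hkv, h, abs_zero]
      have hEq := heq kv hbkv
      have hsets : Finset.univ.filter (fun j => |b (o j)| = |b (o kv)|)
          = Finset.univ.filter (fun j : Fin p => |b (o j)| = v) := by
        ext j; simp [hkv]
      rw [hsets] at hEq
      calc ∑ j ∈ Finset.univ.filter (fun j : Fin p => |b (o j)| = v),
            (lam j - s (o j) * grad (o j)) * |b (o j)|
          = ∑ j ∈ Finset.univ.filter (fun j : Fin p => |b (o j)| = v),
            (lam j - s (o j) * grad (o j)) * v := by
            refine Finset.sum_congr rfl fun j hj => ?_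
            rw [(Finset.mem_filter.mp hj).2]
        _ = (∑ j ∈ Finset.univ.filter (fun j : Fin p => |b (o j)| = v),
            (lam j - s (o j) * grad (o j))) * v := (Finset.sum_mul _ _ _).symm
        _ = 0 := by rw [hEq, zero_mul]
  -- F6 : gradient inequality
  have hgradineq := convex_grad_le f hconv hdiff b β
  have hexp : fderiv ℝ f b (β - b) = ∑ i, (β i - b i) * grad i := by
    rw [fderiv_expand f b (β - b)]
    refine Finset.sum_congr rfl fun i _ => ?_
    rw [hgrad i]
    rfl
  -- F7 : dual bound
  set τ := Tuple.sort (fun j => |β j|) with hτ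
  have hpenβ : slopePen lam β = ∑ k, lam k * |β (τ k)| := by
    simp only [slopePen, sortedAbs, ← hτ]
  have hdual : -∑ i, grad i * β i ≤ slopePen lam β := by
    have h1 : -∑ i, grad i * β i ≤ ∑ i, |grad i| * |β i| := by
      rw [← Finset.sum_neg_distrib]
      apply Finset.sum_le_sum
      intro i _
      calc -(grad i * β i) ≤ |grad i * β i| := neg_le_abs _
        _ = |grad i| * |β i| := abs_mul _ _
    have h2 : ∑ i, |grad i| * |β i| = ∑ k, |grad (τ k)| * |β (τ k)| :=
      (Equiv.sum_comp τ (fun i => |grad i| * |β i|)).symm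
    have h3 : ∑ k, |grad (τ k)| * |β (τ k)| ≤ ∑ k, lam k * |β (τ k)| := by
      set A : ℕ → ℝ := fun m => if h : m < p then |grad (τ ⟨m, h⟩)| else 0 with hA
      set Cc : ℕ → ℝ := fun m => if h : m < p then lam ⟨m, h⟩ else 0 with hCc
      set Y : ℕ → ℝ := fun m => if h : m < p then |β (τ ⟨m, h⟩)| else 0 with hY
      have hAY : ∀ k : Fin p, A k.val * Y k.val = |grad (τ k)| * |β (τ k)| := by
        intro k; simp [hA, hY, k.isLt]
      have hCY : ∀ k : Fin p, Cc k.val * Y k.val = lam k * |β (τ k)| := by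
        intro k; simp [hCc, hY, k.isLt]
      have hL : ∑ k : Fin p, |grad (τ k)| * |β (τ k)| = ∑ m ∈ Finset.Ico 0 p, A m * Y m := by
        rw [← Finset.range_eq_Ico, ← Fin.sum_univ_eq_sum_range (fun m => A m * Y m) p]
        exact Finset.sum_congr rfl fun k _ => (hAY k).symm
      have hR : ∑ k : Fin p, lam k * |β (τ k)| = ∑ m ∈ Finset.Ico 0 p, Cc m * Y m := by
        rw [← Finset.range_eq_Ico, ← Fin.sum_univ_eq_sum_range (fun m => Cc m * Y m) p]
        exact Finset.sum_congr rfl fun k _ => (hCY k).symm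
      rw [hL, hR]
      refine abel_le A Cc p 0 p (by omega) Y ?_ ?_ ?_
      · intro i j _ hij hj
        have hi : i < p := lt_of_le_of_lt hij hj
        have hmono' : Monotone ((fun j => |β j|) ∘ τ) := Tuple.monotone_sort (fun j => |β j|)
        have := hmono' (show (⟨i, hi⟩ : Fin p) ≤ ⟨j, hj⟩ from hij)
        simp only [Function.comp] at this
        simp only [hY, dif_pos hi, dif_pos hj]
        exact this
      · intro m _ hm
        simp only [hY, dif_pos hm]
        exact abs_nonneg _
      · intro j _
        by_cases hj : j ≤ p
        · have hAeq : ∑ m ∈ Finset.Ico j p, A m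
              = ∑ i ∈ Finset.univ.filter (fun i : Fin p => j ≤ i.val), |grad (τ i)| :=
            (sum_filter_eq_sum_Ico (fun i => |grad (τ i)|) j).symm
          have hCeq : ∑ m ∈ Finset.Ico j p, Cc m
              = ∑ i ∈ Finset.univ.filter (fun i : Fin p => j ≤ i.val), lam i :=
            (sum_filter_eq_sum_Ico lam j).symm
          rw [hAeq, hCeq]
          set S := (Finset.univ.filter (fun i : Fin p => j ≤ i.val)).image
            (fun i => o.symm (τ i)) with hS
          have hinj : ∀ x ∈ Finset.univ.filter (fun i : Fin p => j ≤ i.val),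
              ∀ y ∈ Finset.univ.filter (fun i : Fin p => j ≤ i.val),
              o.symm (τ x) = o.symm (τ y) → x = y := by
            intro x _ y _ hxy
            exact τ.injective (o.symm.injective hxy)
          have hcardS : S.card = p - j := by
            rw [hS, Finset.card_image_of_injOn hinj, filter_le_card j hj]
          have hsum1 : ∑ x ∈ S, s (o x) * grad (o x)
              = ∑ i ∈ Finset.univ.filter (fun i : Fin p => j ≤ i.val), |grad (τ i)| := by
            rw [hS, Finset.sum_image hinj]
            refine Finset.sum_congr rfl fun i _ => ?_
            have happ : o (o.symm (τ i)) = τ i := o.apply_symm_apply (τ i)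
            have hx := (habs (o.symm (τ i))).2
            rw [happ] at hx
            simpa [happ] using hx
          have hBS := hB S
          rw [hsum1] at hBS
          rw [hcardS] at hBS
          have hjj : p - (p - j) = j := by omega
          rw [hjj] at hBS
          exact hBS
        · rw [Finset.Ico_eq_empty (by omega)]
          simp
    calc -∑ i, grad i * β i ≤ ∑ i, |grad i| * |β i| := h1
      _ = ∑ k, |grad (τ k)| * |β (τ k)| := h2
      _ ≤ ∑ k, lam k * |β (τ k)| := h3
      _ = slopePen lam β := hpenβ.symm
  -- assemble everything
  have hlamD : ∑ k, lam k * |b (o k)| = ∑ k, (s (o k) * grad (o k)) * |b (o k)| := by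
    have h := hzero
    have : ∑ k, ((lam k - s (o k) * grad (o k)) * |b (o k)|)
        = ∑ k, (lam k * |b (o k)| - (s (o k) * grad (o k)) * |b (o k)|) :=
      Finset.sum_congr rfl fun k _ => by ring
    rw [this, Finset.sum_sub_distrib] at h
    linarith
  have hsub : ∑ i, (β i - b i) * grad i = ∑ i, β i * grad i - ∑ i, b i * grad i := by
    rw [← Finset.sum_sub_distrib]
    exact Finset.sum_congr rfl fun i _ => by ring
  have hcomm1 : ∑ i, grad i * b i = ∑ i, b i * grad i :=
    Finset.sum_congr rfl fun i _ => by ring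
  have hcomm2 : ∑ i, grad i * β i = ∑ i, β i * grad i :=
    Finset.sum_congr rfl fun i _ => by ring
  rw [hexp, hsub] at hgradineq
  rw [hpenb, hlamD]
  have hb' : ∑ k, (s (o k) * grad (o k)) * |b (o k)| = -∑ i, b i * grad i := by
    rw [← hcomm1]; linarith [hgradb]
  rw [hb']
  have hd' : -∑ i, β i * grad i ≤ slopePen lam β := by
    rw [← hcomm2]; exact hdual
  linarith
end

section
/- Under the setup of the SLOPE optimality conditions with strongly convex differentiable f, if the stationarity equality λ^G_{g,1} − ∇f^G_{g,1}(β̂) ≠ 0 fails for some nonzero group g, then β̂ is not a global minimizer of h(β) = f(β) + ∑ λ_i |β|_(i): perturbing all coordinates in group G_g by ±δ in the direction reducing the objective gives h(β̃) − h(β̂) = −|λ^G_{g,1} − ∇f^G_{g,1}(β̂)|δ + o(δ) < 0 for small δ > 0. -/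
open Finset

lemma slopePen_eq {p : ℕ} (lam β : Fin p → ℝ) (σ : Equiv.Perm (Fin p))
    (h : Monotone fun j => |β (σ j)|) :
    slopePen lam β = ∑ j, lam j * |β (σ j)| := by
  have key : (fun j => |β j|) ∘ σ = (fun j => |β j|) ∘ Tuple.sort (fun j => |β j|) :=
    Tuple.comp_sort_eq_comp_iff_monotone.mpr h
  unfold slopePen sortedAbs
  refine Finset.sum_congr rfl fun j _ => ?_
  have := congrFun key j
  simp only [Function.comp] at this
  rw [← this]

theorem stmt13 {p : ℕ} (lam : Fin p → ℝ) (hmono : Monotone lam)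
    (hnonneg : ∀ i, 0 ≤ lam i) (f : (Fin p → ℝ) → ℝ) (m : ℝ) (hm : 0 < m)
    (hconv : StrongConvexOn Set.univ m f) (hdiff : Differentiable ℝ f)
    (b : Fin p → ℝ) (o : Equiv.Perm (Fin p))
    (grad : Fin p → ℝ) (hgrad : ∀ i, grad i = fderiv ℝ f b (Pi.single i 1))
    (s : Fin p → ℝ) (hs : ∀ i, b i ≠ 0 → s i = -Real.sign (b i))
    (hosort : Monotone fun i => |b (o i)|)
    (hfail : ∃ i : Fin p, b (o i) ≠ 0 ∧
      ∑ j ∈ Finset.univ.filter (fun j => |b (o j)| = |b (o i)|),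
        (lam j - s (o j) * grad (o j)) ≠ 0) :
    ∃ β : Fin p → ℝ, f β + slopePen lam β < f b + slopePen lam b := by
  obtain ⟨i₀, hb0, hc⟩ := hfail
  set v : ℝ := |b (o i₀)| with hv
  have hv0 : 0 < v := abs_pos.mpr hb0
  set S : Finset (Fin p) := Finset.univ.filter (fun j => |b (o j)| = v) with hS
  set c : ℝ := ∑ j ∈ S, (lam j - s (o j) * grad (o j)) with hcdef
  have hc : c ≠ 0 := hc
  set u : ℝ := if 0 < c then 1 else -1 with hu
  have hu1 : u = 1 ∨ u = -1 := by
    rw [hu]; split <;> simp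
  have huabs : |u| = 1 := by rcases hu1 with h | h <;> simp [h]
  have huc : u * c = |c| := by
    rw [hu]; split
    · rw [abs_of_pos ‹_›]; ring
    · rw [abs_of_neg (lt_of_le_of_ne (not_lt.mp ‹_›) hc)]; ring
  have hcpos : 0 < |c| := abs_pos.mpr hc
  set d : Fin p → ℝ := fun i => if |b i| = v then -u * Real.sign (b i) else 0 with hd
  -- minimal gap
  set T : Finset ℝ := (Finset.univ.image fun j => |b (o j)|).filter (· ≠ v) with hT
  set E : Finset ℝ := insert v (T.image fun w => |w - v|) with hE
  have hEne : E.Nonempty := ⟨v, Finset.mem_insert_self _ _⟩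
  set δ₀ : ℝ := E.min' hEne with hδ
  have hEpos : ∀ x ∈ E, 0 < x := by
    intro x hx
    rcases Finset.mem_insert.mp hx with h | h
    · rwa [h]
    · obtain ⟨w, hw, rfl⟩ := Finset.mem_image.mp h
      have : w ≠ v := (Finset.mem_filter.mp hw).2
      exact abs_pos.mpr (sub_ne_zero.mpr this)
  have hδpos : 0 < δ₀ := hEpos _ (E.min'_mem hEne)
  have hδv : δ₀ ≤ v := Finset.min'_le _ _ (Finset.mem_insert_self _ _)
  have hgap : ∀ j : Fin p, |b (o j)| ≠ v → δ₀ ≤ abs (|b (o j)| - v) := by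
    intro j hj
    refine Finset.min'_le _ _ ?_
    refine Finset.mem_insert_of_mem (Finset.mem_image.mpr ⟨|b (o j)|, ?_, rfl⟩)
    exact Finset.mem_filter.mpr ⟨Finset.mem_image.mpr ⟨j, Finset.mem_univ _, rfl⟩, hj⟩
  -- the perturbed point
  set γ : ℝ → (Fin p → ℝ) := fun t i => b i + t * d i with hγ
  have hγ0 : γ 0 = b := by funext i; simp [hγ]
  set Λ : ℝ := ∑ j ∈ S, lam j with hΛ
  set L : ℝ := -(u * Λ) with hL
  -- penalty is linear for small t
  have pen_eq : ∀ t : ℝ, 0 < t → t < δ₀ →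
      slopePen lam (γ t) = slopePen lam b + t * L := by
    intro t ht0 htδ
    have hut : ∀ x : ℝ, u * x ≤ |x| := by
      intro x
      calc u * x ≤ |u * x| := le_abs_self _
        _ = |x| := by rw [abs_mul, huabs, one_mul]
    have hpos' : 0 < v - u * t := by
      have h1 : u * t ≤ t := by simpa [abs_of_pos ht0] using hut t
      linarith
    have habs1 : ∀ i : Fin p, |b i| = v → |γ t i| = v - u * t := by
      intro i hi
      have hγi : γ t i = b i + t * (-u * Real.sign (b i)) := by
        simp only [hγ, hd]
        rw [if_pos hi]
      rcases lt_trichotomy (b i) 0 with hneg | hz | hposb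
      · have hsg : Real.sign (b i) = -1 := Real.sign_of_neg hneg
        have hbi : b i = -v := by rw [← hi, abs_of_neg hneg]; ring
        rw [hγi, hsg, hbi]
        have heq : -v + t * (-u * (-1)) = -(v - u * t) := by ring
        rw [heq, abs_neg, abs_of_pos hpos']
      · exfalso
        rw [hz, abs_zero] at hi
        exact (ne_of_gt hv0) hi.symm
      · have hsg : Real.sign (b i) = 1 := Real.sign_of_pos hposb
        have hbi : b i = v := by rw [← hi, abs_of_pos hposb]
        rw [hγi, hsg, hbi]
        have heq : v + t * (-u * 1) = v - u * t := by ring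
        rw [heq, abs_of_pos hpos']
    have habs2 : ∀ i : Fin p, |b i| ≠ v → γ t i = b i := by
      intro i hi
      simp [hγ, hd, hi]
    have hval : ∀ j : Fin p, |γ t (o j)| =
        if |b (o j)| = v then v - u * t else |b (o j)| := by
      intro j
      by_cases h : |b (o j)| = v
      · rw [if_pos h, habs1 _ h]
      · rw [if_neg h, habs2 _ h]
    have hutle : u * t ≤ t := by simpa [abs_of_pos ht0] using hut t
    have hutge : -t ≤ u * t := by
      have := hut (-t); simp [abs_of_pos ht0] at this; linarith [this]
    have hgmono : Monotone fun j => |γ t (o j)| := by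
      intro j j' hjj'
      simp only [hval]
      have hmm : |b (o j)| ≤ |b (o j')| := hosort hjj'
      by_cases h1 : |b (o j)| = v <;> by_cases h2 : |b (o j')| = v
      · simp [h1, h2]
      · rw [if_pos h1, if_neg h2]
        have hlt : v < |b (o j')| := lt_of_le_of_ne (h1 ▸ hmm) (Ne.symm h2)
        have := hgap j' h2
        rw [abs_of_pos (by linarith)] at this
        linarith
      · rw [if_neg h1, if_pos h2]
        have hlt : |b (o j)| < v := lt_of_le_of_ne (h2 ▸ hmm) h1
        have := hgap j h1
        rw [abs_of_neg (by linarith)] at this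
        linarith
      · rw [if_neg h1, if_neg h2]; exact hmm
    rw [slopePen_eq lam (γ t) o hgmono, slopePen_eq lam b o hosort]
    have step : ∀ j : Fin p, lam j * |γ t (o j)| =
        lam j * |b (o j)| + (if |b (o j)| = v then lam j * (-(u * t)) else 0) := by
      intro j
      rw [hval j]
      by_cases h : |b (o j)| = v
      · rw [if_pos h, if_pos h, h]; ring
      · rw [if_neg h, if_neg h]; ring
    rw [Finset.sum_congr rfl fun j _ => step j, Finset.sum_add_distrib,
      ← Finset.sum_filter, ← hS]
    have : ∑ j ∈ S, lam j * (-(u * t)) = t * L := by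
      rw [← Finset.sum_mul, ← hΛ, hL]; ring
    rw [this]
  -- derivative of f along γ
  have hfd : ∀ x : Fin p → ℝ, fderiv ℝ f b x = ∑ i, x i * grad i := by
    intro x
    conv_lhs => rw [pi_eq_sum_univ x]
    rw [map_sum]
    refine Finset.sum_congr rfl fun i _ => ?_
    have hsingle : (fun j => if i = j then (1:ℝ) else 0) = Pi.single i 1 := by
      funext j; simp [Pi.single_apply, eq_comm]
    rw [hsingle, map_smul, hgrad i]
    simp [mul_comm]
  have hγderiv : HasDerivAt γ d 0 := by
    have h1 : HasDerivAt (fun t : ℝ => t • d) ((1:ℝ) • d) 0 :=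
      (hasDerivAt_id 0).smul_const d
    have h2 : HasDerivAt (fun t : ℝ => b + t • d) ((1:ℝ) • d) 0 := h1.const_add b
    have : γ = fun t : ℝ => b + t • d := by
      funext t i; simp [hγ]
    rw [this]
    simpa using h2
  have hcomp : HasDerivAt (fun t => f (γ t)) (∑ i, d i * grad i) 0 := by
    have hf : HasFDerivAt f (fderiv ℝ f b) (γ 0) := by
      rw [hγ0]; exact (hdiff b).hasFDerivAt
    have := hf.comp_hasDerivAt 0 hγderiv
    rw [hfd d] at this
    exact this
  -- the total derivative is -|c|
  set φ : ℝ → ℝ := fun t => f (γ t) + t * L with hφdef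
  have hD : (∑ i, d i * grad i) + L = -|c| := by
    have hsum : ∑ i, d i * grad i = ∑ j, d (o j) * grad (o j) :=
      (Equiv.sum_comp o fun i => d i * grad i).symm
    have hsum2 : ∑ j, d (o j) * grad (o j) = ∑ j ∈ S, u * (s (o j) * grad (o j)) := by
      rw [hS, Finset.sum_filter]
      refine Finset.sum_congr rfl fun j _ => ?_
      by_cases h : |b (o j)| = v
      · rw [if_pos h]
        have hbne : b (o j) ≠ 0 := by
          intro hz; rw [hz] at h; simp at h; exact absurd h.symm (ne_of_gt hv0)
        rw [hd]
        simp only [if_pos h]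
        rw [hs _ hbne]; ring
      · rw [if_neg h, hd]; simp [h]
    have hcBA : c = Λ - ∑ j ∈ S, s (o j) * grad (o j) := by
      rw [hcdef, hΛ, Finset.sum_sub_distrib]
    rw [hsum, hsum2, ← Finset.mul_sum, hL, ← huc, hcBA]
    ring
  have hφ : HasDerivAt φ (-|c|) 0 := by
    rw [← hD]
    exact hcomp.add ((hasDerivAt_id 0).mul_const L |>.congr_deriv (one_mul L))
  -- get a small t with φ t < φ 0
  have hslope : Filter.Tendsto (slope φ 0) (nhdsWithin 0 (Set.Ioi 0)) (nhds (-|c|)) := by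
    have := hasDerivAt_iff_tendsto_slope.mp hφ
    exact this.mono_left (nhdsWithin_mono 0 fun x hx => ne_of_gt hx)
  have h1 : ∀ᶠ t in nhdsWithin (0:ℝ) (Set.Ioi 0), slope φ 0 t < 0 :=
    hslope.eventually_lt_const (by linarith : (-|c|) < (0:ℝ))
  have h2 : ∀ᶠ t in nhdsWithin (0:ℝ) (Set.Ioi 0), t < δ₀ :=
    Filter.eventually_of_mem (Ioo_mem_nhdsGT_of_mem ⟨le_refl 0, hδpos⟩) fun x hx => hx.2
  have h3 : ∀ᶠ t in nhdsWithin (0:ℝ) (Set.Ioi 0), 0 < t :=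
    Filter.eventually_of_mem self_mem_nhdsWithin fun x hx => hx
  obtain ⟨t, hts, ht0⟩ := ((h1.and h2).and h3).exists
  refine ⟨γ t, ?_⟩
  have hts' := hts.1
  have htδ' := hts.2
  have hφt : φ t < φ 0 := by
    have hslope_eq : slope φ 0 t = (φ t - φ 0) / t := by
      rw [slope_def_field]; ring_nf
    rw [hslope_eq] at hts'
    have := mul_neg_of_neg_of_pos hts' ht0
    rw [div_mul_cancel₀ _ (ne_of_gt ht0)] at this
    linarith
  have hφ0 : φ 0 = f b := by simp [hφdef, hγ0]
  calc f (γ t) + slopePen lam (γ t)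
      = f (γ t) + (slopePen lam b + t * L) := by rw [pen_eq t ht0 htδ']
    _ = φ t + slopePen lam b := by rw [hφdef]; ring
    _ < φ 0 + slopePen lam b := by linarith
    _ = f b + slopePen lam b := by rw [hφ0]
end

section
/- If two vectors β̃ and β̂ in ℝ^p satisfy ‖β̃ − β̂‖_∞ < (1/2)·min over consecutive distinct absolute-value levels of β̂ of their gap, then any permutation that sorts |β̃| in nondecreasing order also sorts |β̂| in nondecreasing order; consequently ∑_{i=1}^p λ_i(|β̃|_(i) − |β̂|_(i)) = ∑_{i=1}^p λ_i Δ_{õ(i)} where Δ = |β̃| − |β̂| and õ is an ordering sorting Δ within the groups of equal |β̂|, nondecreasing. -/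
open Finset

theorem stmt14 {p : ℕ} (lam : Fin p → ℝ) (hmono : Monotone lam)
    (hnonneg : ∀ i, 0 ≤ lam i) (bhat btil : Fin p → ℝ)
    (hclose : ∀ i j : Fin p, |bhat i| ≠ |bhat j| →
      ∀ k, |btil k - bhat k| < |(|bhat i| - |bhat j|)| / 2) :
    (∀ σ : Equiv.Perm (Fin p), (Monotone fun i => |btil (σ i)|) →
      Monotone fun i => |bhat (σ i)|) ∧
    (∀ σ : Equiv.Perm (Fin p), (Monotone fun i => |bhat (σ i)|) →
      (∀ i j : Fin p, i ≤ j → |bhat (σ i)| = |bhat (σ j)| →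
        |btil (σ i)| - |bhat (σ i)| ≤ |btil (σ j)| - |bhat (σ j)|) →
      ∑ i, lam i * (sortedAbs btil i - sortedAbs bhat i) =
        ∑ i, lam i * (|btil (σ i)| - |bhat (σ i)|)) := by
  have habs : ∀ k, ∀ i j : Fin p, |bhat i| ≠ |bhat j| →
      abs (|btil k| - |bhat k|) < |(|bhat i| - |bhat j|)| / 2 := by
    intro k i j hij
    exact lt_of_le_of_lt (abs_abs_sub_abs_le_abs_sub _ _) (hclose i j hij k)
  have part1 : ∀ σ : Equiv.Perm (Fin p), (Monotone fun i => |btil (σ i)|) →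
      Monotone fun i => |bhat (σ i)| := by
    intro σ hm i j hij
    by_contra h
    push_neg at h
    have hne : |bhat (σ i)| ≠ |bhat (σ j)| := by
      intro he; rw [he] at h; exact lt_irrefl _ h
    have hi := abs_lt.mp (habs (σ i) (σ i) (σ j) hne)
    have hj := abs_lt.mp (habs (σ j) (σ i) (σ j) hne)
    have hg : |(|bhat (σ i)| - |bhat (σ j)|)| = |bhat (σ i)| - |bhat (σ j)| :=
      abs_of_pos (by linarith)
    rw [hg] at hi hj
    have := hm hij
    simp only at this
    linarith [hi.1, hj.2]
  refine ⟨part1, ?_⟩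
  intro σ hbm hties
  have htm : Monotone fun i => |btil (σ i)| := by
    intro i j hij
    rcases eq_or_lt_of_le (hbm hij : |bhat (σ i)| ≤ |bhat (σ j)|) with he | hlt
    · have := hties i j hij he
      simp only at this he ⊢
      linarith
    · have hne : |bhat (σ i)| ≠ |bhat (σ j)| := ne_of_lt hlt
      have hi := abs_lt.mp (habs (σ i) (σ i) (σ j) hne)
      have hj := abs_lt.mp (habs (σ j) (σ i) (σ j) hne)
      have hg : |(|bhat (σ i)| - |bhat (σ j)|)| = |bhat (σ j)| - |bhat (σ i)| := by
        rw [abs_sub_comm]; exact abs_of_pos (by linarith)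
      rw [hg] at hi hj
      simp only
      linarith [hi.2, hj.1]
  have hbm' : Monotone fun i => |bhat (σ i)| := hbm
  have e1 : ((fun j => |btil j|) ∘ Tuple.sort (fun j => |btil j|)) =
      (fun j => |btil j|) ∘ σ :=
    Tuple.unique_monotone (Tuple.monotone_sort _) htm
  have e2 : ((fun j => |bhat j|) ∘ Tuple.sort (fun j => |bhat j|)) =
      (fun j => |bhat j|) ∘ σ :=
    Tuple.unique_monotone (Tuple.monotone_sort _) hbm'
  refine Finset.sum_congr rfl fun i _ => ?_
  have h1 : sortedAbs btil i = |btil (σ i)| := congrFun e1 i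
  have h2 : sortedAbs bhat i = |bhat (σ i)| := congrFun e2 i
  rw [h1, h2]
end

section
/- For OSCAR weights λ^OSCAR with λ^OSCAR_i = q + η(i−1), q, η ≥ 0, the SLOPE penalty ∑_{i=1}^p λ^OSCAR_i |β|_(i) equals q∑_{i=1}^p |β_i| + η∑_{j<k} max(|β_j|, |β_k|) for every β ∈ ℝ^p. -/
open Finset

-- split double sum of a symmetric function
lemma full_eq {p : ℕ} (g : Fin p → Fin p → ℝ) (hg : ∀ j k, g j k = g k j) :
    ∑ j, ∑ k, g j k =
      2 * (∑ j, ∑ k ∈ Finset.univ.filter (fun k => j < k), g j k) + ∑ j, g j j := by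
  have h1 : ∀ j k : Fin p, g j k =
      (if j < k then g j k else 0) + (if k < j then g j k else 0) +
      (if j = k then g j k else 0) := by
    intro j k
    rcases lt_trichotomy j k with h | h | h
    · simp [h, h.ne, not_lt_of_gt h]
    · simp [h]
    · simp [h, h.ne', not_lt_of_gt h]
  calc ∑ j, ∑ k, g j k
      = ∑ j, ∑ k, ((if j < k then g j k else 0) + (if k < j then g j k else 0) +
        (if j = k then g j k else 0)) := by
        refine Finset.sum_congr rfl fun j _ => Finset.sum_congr rfl fun k _ => h1 j k
    _ = (∑ j, ∑ k, if j < k then g j k else 0) + (∑ j, ∑ k, if k < j then g j k else 0)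
        + (∑ j, ∑ k, if j = k then g j k else 0) := by
        simp [Finset.sum_add_distrib]
    _ = 2 * (∑ j, ∑ k ∈ Finset.univ.filter (fun k => j < k), g j k) + ∑ j, g j j := by
        have hswap : (∑ j, ∑ k, if k < j then g j k else 0)
            = ∑ j, ∑ k, if j < k then g j k else 0 := by
          rw [Finset.sum_comm]
          refine Finset.sum_congr rfl fun j _ => Finset.sum_congr rfl fun k _ => ?_
          rw [hg]
        have hdiag : (∑ j, ∑ k, if j = k then g j k else 0) = ∑ j, g j j := by
          refine Finset.sum_congr rfl fun j _ => ?_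
          simp
        rw [hswap, hdiag]
        simp [Finset.sum_filter]
        ring

lemma T_perm {p : ℕ} (a : Fin p → ℝ) (σ : Equiv.Perm (Fin p)) :
    (∑ j, ∑ k ∈ Finset.univ.filter (fun k => j < k), max (a (σ j)) (a (σ k)))
      = ∑ j, ∑ k ∈ Finset.univ.filter (fun k => j < k), max (a j) (a k) := by
  have h1 := full_eq (fun j k => max (a (σ j)) (a (σ k))) (fun j k => max_comm _ _)
  have h2 := full_eq (fun j k => max (a j) (a k)) (fun j k => max_comm _ _)
  have hfull : (∑ j, ∑ k, max (a (σ j)) (a (σ k))) = ∑ j, ∑ k, max (a j) (a k) := by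
    rw [Finset.sum_comm]
    calc ∑ k, ∑ j, max (a (σ j)) (a (σ k))
        = ∑ k, ∑ j, max (a j) (a (σ k)) := by
          refine Finset.sum_congr rfl fun k _ => ?_
          exact Equiv.sum_comp σ (fun j => max (a j) (a (σ k)))
      _ = ∑ j, ∑ k, max (a j) (a (σ k)) := Finset.sum_comm
      _ = ∑ j, ∑ k, max (a j) (a k) := by
          refine Finset.sum_congr rfl fun j _ => ?_
          exact Equiv.sum_comp σ (fun k => max (a j) (a k))
  have hdiag : (∑ j, max (a (σ j)) (a (σ j))) = ∑ j, max (a j) (a j) :=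
    Equiv.sum_comp σ (fun j => max (a j) (a j))
  have := h1.symm.trans (hfull.trans h2)
  rw [hdiag] at this
  linarith

theorem stmt17 {p : ℕ} (q η : ℝ) (hq : 0 ≤ q) (hη : 0 ≤ η) (β : Fin p → ℝ) :
    slopePen (fun i : Fin p => q + η * (i : ℝ)) β =
      q * ∑ i, |β i| + η * ∑ j, ∑ k ∈ Finset.univ.filter (fun k => j < k), max |β j| |β k| := by
  set σ := Tuple.sort (fun j => |β j|) with hσ
  set s : Fin p → ℝ := sortedAbs β with hs
  have hmono : Monotone s := Tuple.monotone_sort (fun j => |β j|)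
  have hsum : (∑ i, s i) = ∑ i, |β i| := Equiv.sum_comp σ (fun j => |β j|)
  have hpair : (∑ j, ∑ k ∈ Finset.univ.filter (fun k => j < k), max |β j| |β k|)
      = ∑ j, ∑ k ∈ Finset.univ.filter (fun k => j < k), max (s j) (s k) :=
    (T_perm (fun j => |β j|) σ).symm
  have hsorted : (∑ j, ∑ k ∈ Finset.univ.filter (fun k => j < k), max (s j) (s k))
      = ∑ i : Fin p, (i : ℝ) * s i := by
    calc (∑ j, ∑ k ∈ Finset.univ.filter (fun k => j < k), max (s j) (s k))
        = ∑ j, ∑ k ∈ Finset.univ.filter (fun k => j < k), s k := by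
          refine Finset.sum_congr rfl fun j _ => Finset.sum_congr rfl fun k hk => ?_
          rw [Finset.mem_filter] at hk
          exact max_eq_right (hmono hk.2.le)
      _ = ∑ j, ∑ k, if j < k then s k else 0 := by
          simp [Finset.sum_filter]
      _ = ∑ k, ∑ j, if j < k then s k else 0 := Finset.sum_comm
      _ = ∑ k : Fin p, (k : ℝ) * s k := by
          refine Finset.sum_congr rfl fun k _ => ?_
          rw [← Finset.sum_filter]
          have : Finset.univ.filter (fun j => j < k) = Finset.Iio k := by
            ext j; simp
          rw [this, Finset.sum_const, Fin.card_Iio, nsmul_eq_mul]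
  rw [hpair, hsorted]
  unfold slopePen
  rw [← hs]
  rw [← hsum]
  rw [Finset.mul_sum, Finset.mul_sum, ← Finset.sum_add_distrib]
  refine Finset.sum_congr rfl fun i _ => ?_
  ring
end

section
/- Let the monotone nonnegative cone be K = {β ∈ ℝ^p : 0 ≤ β₁ ≤ ... ≤ β_p} and B' = conv{r·b₁, ..., r·b_p} be the convex hull of the scaled extreme unit vectors b_i (last i coordinates 1/√i, rest zero). Then for every nonnegative vector λ ∈ K (viewed as a weight vector), min_{β ∈ K, ‖β‖=r} ⟨λ, β⟩ = min_{β ∈ B'} ⟨λ, β⟩ = min_{i=1,...,p} r⟨λ, b_i⟩. -/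
open Finset

lemma bvec_mono (p : ℕ) (i : Fin p) : Monotone (bvec p i) := by
  intro j j' h
  unfold bvec
  split_ifs with h1 h2
  · exact le_refl _
  · exact absurd (le_trans h1 (by omega : (j:ℕ)+(i:ℕ)+1 ≤ (j':ℕ)+(i:ℕ)+1)) h2
  · positivity
  · exact le_refl _

lemma filter_card' (p n : ℕ) :
    ((range p).filter (fun k => n ≤ k)).card = p - n := by
  have : (range p).filter (fun k => n ≤ k) = Ico n p := by ext k; simp; omega
  rw [this, Nat.card_Ico]

lemma sum_ind' (p n : ℕ) : ∑ k ∈ range p, (if n ≤ k then (1:ℝ) else 0) = ((p - n : ℕ) : ℝ) := by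
  rw [Finset.sum_boole]
  simp [filter_card']

lemma bvec_sq_sum (p : ℕ) (i : Fin p) : ∑ j, (bvec p i j) ^ 2 = 1 := by
  unfold bvec
  rw [Fin.sum_univ_eq_sum_range (fun k => (if p ≤ k + (i:ℕ) + 1 then 1 / Real.sqrt ((i:ℕ)+1) else 0) ^ 2)]
  have hs : Real.sqrt ((i:ℕ)+1) ^ 2 = (i:ℕ)+1 := Real.sq_sqrt (by positivity)
  have h1 : ∀ k, (if p ≤ k + (i:ℕ) + 1 then 1 / Real.sqrt ((i:ℕ)+1) else 0) ^ 2
      = (1/((i:ℕ)+1)) * (if p - (i:ℕ) - 1 ≤ k then (1:ℝ) else 0) := by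
    intro k
    have hc : (p ≤ k + (i:ℕ) + 1) ↔ (p - (i:ℕ) - 1 ≤ k) := by omega
    simp only [hc]
    split
    · rw [div_pow, one_pow, hs]; ring
    · simp
  simp only [h1]
  rw [← Finset.mul_sum, sum_ind']
  have : p - (p - (i:ℕ) - 1) = (i:ℕ) + 1 := by have := i.isLt; omega
  rw [this]
  push_cast
  field_simp

lemma sum_lam_bvec (p : ℕ) (lam : Fin p → ℝ) (i : Fin p) :
    ∑ j, lam j * bvec p i j
      = (∑ j : Fin p, if p - (i:ℕ) - 1 ≤ (j:ℕ) then lam j else 0) / Real.sqrt ((i:ℕ)+1) := by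
  rw [Finset.sum_div]
  apply Finset.sum_congr rfl
  intro j _
  unfold bvec
  have hc : (p ≤ (j:ℕ) + (i:ℕ) + 1) ↔ (p - (i:ℕ) - 1 ≤ (j:ℕ)) := by omega
  simp only [hc]
  split <;> simp [div_eq_mul_inv, mul_comm]

lemma euclid_sum_apply {p : ℕ} (s : Finset ℕ) (D : ℕ → ℝ) (v : ℕ → EuclideanSpace ℝ (Fin p))
    (j : Fin p) : (∑ x ∈ s, D x • v x) j = ∑ x ∈ s, D x * v x j := by
  classical
  induction s using Finset.induction with
  | empty => rfl
  | insert a s h ih => rw [Finset.sum_insert h, Finset.sum_insert h, ← ih]; rfl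

lemma norm_ineq (p : ℕ) (β : Fin p → ℝ) (D : ℕ → ℝ) (hD : ∀ n, 0 ≤ D n)
    (hrep : ∀ j : Fin p, β j = ∑ n ∈ range ((j:ℕ)+1), D n) :
    Real.sqrt (∑ j, (β j)^2) ≤ ∑ n ∈ range p, D n * Real.sqrt ((p - n : ℕ) : ℝ) := by
  set v : ℕ → EuclideanSpace ℝ (Fin p) := fun n =>
    (WithLp.equiv 2 (Fin p → ℝ)).symm (fun j : Fin p => if n ≤ (j:ℕ) then (1:ℝ) else 0) with hv
  have hva : ∀ n j, v n j = if n ≤ (j:ℕ) then (1:ℝ) else 0 := fun n j => rfl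
  have hvnorm : ∀ n, ‖v n‖ = Real.sqrt ((p - n : ℕ) : ℝ) := by
    intro n
    rw [EuclideanSpace.norm_eq]
    congr 1
    have hterm : ∀ j : Fin p, ‖v n j‖^2 = if n ≤ (j:ℕ) then (1:ℝ) else 0 := by
      intro j; rw [hva]; split <;> simp
    simp only [hterm]
    rw [Fin.sum_univ_eq_sum_range (fun k => if n ≤ k then (1:ℝ) else 0), sum_ind']
  have hx : (WithLp.equiv 2 (Fin p → ℝ)).symm β = ∑ n ∈ range p, D n • v n := by
    rw [Equiv.symm_apply_eq]
    funext j
    have hs : (∑ n ∈ range p, D n • v n) j = ∑ n ∈ range p, D n * v n j :=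
      euclid_sum_apply _ _ _ _
    show β j = (∑ n ∈ range p, D n • v n) j
    rw [hs, hrep j]
    have hfil : (range p).filter (fun n => n ≤ (j:ℕ)) = range ((j:ℕ)+1) := by
      ext k; simp; have := j.isLt; omega
    calc ∑ n ∈ range ((j:ℕ)+1), D n
        = ∑ n ∈ (range p).filter (fun n => n ≤ (j:ℕ)), D n := by rw [hfil]
      _ = ∑ n ∈ range p, if n ≤ (j:ℕ) then D n else 0 := by rw [Finset.sum_filter]
      _ = ∑ n ∈ range p, D n * v n j := by
          apply Finset.sum_congr rfl; intro n _; rw [hva]; split <;> simp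
  have h1 : Real.sqrt (∑ j, (β j)^2) = ‖(WithLp.equiv 2 (Fin p → ℝ)).symm β‖ := by
    rw [EuclideanSpace.norm_eq]
    simp [sq_abs]
  rw [h1, hx]
  calc ‖∑ n ∈ range p, D n • v n‖ ≤ ∑ n ∈ range p, ‖D n • v n‖ := norm_sum_le _ _
    _ = ∑ n ∈ range p, D n * Real.sqrt ((p - n : ℕ) : ℝ) := by
        apply Finset.sum_congr rfl; intro n _
        rw [norm_smul, hvnorm, Real.norm_eq_abs, abs_of_nonneg (hD n)]

lemma key_decomp (p : ℕ) (hp : 0 < p) (β : Fin p → ℝ) (hmono : Monotone β)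
    (hnn : ∀ i, 0 ≤ β i) :
    ∃ D : ℕ → ℝ, (∀ n, 0 ≤ D n) ∧ (∀ j : Fin p, β j = ∑ n ∈ range ((j:ℕ)+1), D n) := by
  set B : ℕ → ℝ := fun m => β ⟨min m (p-1), by omega⟩ with hB
  set G : ℕ → ℝ := fun n => if n = 0 then 0 else B (n-1) with hG
  refine ⟨fun n => G (n+1) - G n, ?_, ?_⟩
  · intro n
    rcases Nat.eq_zero_or_pos n with h | h
    · subst h; simp [hG, hB]; exact hnn _
    · have hn : n ≠ 0 := by omega
      simp only [hG, hB, if_neg (Nat.succ_ne_zero n), if_neg hn, sub_nonneg]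
      exact hmono (by simp only [Fin.mk_le_mk]; omega)
  · intro j
    rw [Finset.sum_range_sub G ((j:ℕ)+1)]
    simp only [hG, hB, if_neg (Nat.succ_ne_zero _), if_pos rfl, Nat.add_sub_cancel, sub_zero]
    congr 1
    have := j.isLt
    apply Fin.ext
    simp
    omega

theorem stmt19 {p : ℕ} (hp : 0 < p) (lam : Fin p → ℝ) (hmono : Monotone lam)
    (hnonneg : ∀ i, 0 ≤ lam i) (r : ℝ) (hr : 0 < r) :
    IsLeast {v : ℝ | ∃ β : Fin p → ℝ, Monotone β ∧ (∀ i, 0 ≤ β i) ∧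
        Real.sqrt (∑ i, (β i) ^ 2) = r ∧ v = ∑ i, lam i * β i}
      (Finset.univ.inf' (Finset.univ_nonempty_iff.mpr (Fin.pos_iff_nonempty.mp hp))
        fun i => r * ∑ j, lam j * bvec p i j) ∧
    IsLeast {v : ℝ | ∃ β ∈ convexHull ℝ (Set.range fun i : Fin p => r • bvec p i),
        v = ∑ i, lam i * β i}
      (Finset.univ.inf' (Finset.univ_nonempty_iff.mpr (Fin.pos_iff_nonempty.mp hp))
        fun i => r * ∑ j, lam j * bvec p i j) := by
  have hne : (univ : Finset (Fin p)).Nonempty :=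
    Finset.univ_nonempty_iff.mpr (Fin.pos_iff_nonempty.mp hp)
  set f : Fin p → ℝ := fun i => r * ∑ j, lam j * bvec p i j with hf
  set m : ℝ := univ.inf' hne f with hm
  obtain ⟨i₀, -, hi₀⟩ := Finset.exists_mem_eq_inf' hne f
  have hml : ∀ i, m ≤ f i := fun i => Finset.inf'_le f (mem_univ i)
  have hfnn : ∀ i, 0 ≤ f i := by
    intro i
    apply mul_nonneg hr.le
    exact Finset.sum_nonneg fun j _ => mul_nonneg (hnonneg j) (bvec_nonneg p i j)
  have hm0 : 0 ≤ m := by rw [hm, hi₀]; exact hfnn i₀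
  -- the value of the linear functional at a scaled vertex
  have hval : ∀ i : Fin p, ∑ j, lam j * (r • bvec p i) j = f i := by
    intro i
    show _ = r * ∑ j, lam j * bvec p i j
    rw [Finset.mul_sum]
    apply Finset.sum_congr rfl
    intro j _
    simp [Pi.smul_apply, smul_eq_mul]
    ring
  -- the common lower bound claim for part 1
  have hlb1 : ∀ v ∈ {v : ℝ | ∃ β : Fin p → ℝ, Monotone β ∧ (∀ i, 0 ≤ β i) ∧
      Real.sqrt (∑ i, (β i) ^ 2) = r ∧ v = ∑ i, lam i * β i}, m ≤ v := by
    rintro v ⟨β, hmb, hnnb, hnorm, rfl⟩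
    obtain ⟨D, hDnn, hrep⟩ := key_decomp p hp β hmb hnnb
    have hnormle : r ≤ ∑ n ∈ range p, D n * Real.sqrt ((p - n : ℕ) : ℝ) := by
      rw [← hnorm]; exact norm_ineq p β D hDnn hrep
    set T : ℕ → ℝ := fun n => ∑ j : Fin p, if n ≤ (j:ℕ) then lam j else 0 with hT
    -- Abel summation
    have habel : ∑ j, lam j * β j = ∑ n ∈ range p, D n * T n := by
      calc ∑ j : Fin p, lam j * β j
          = ∑ j : Fin p, ∑ n ∈ range p, (if n ≤ (j:ℕ) then lam j * D n else 0) := by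
            apply Finset.sum_congr rfl
            intro j _
            rw [hrep j, Finset.mul_sum]
            have hfil : (range p).filter (fun n => n ≤ (j:ℕ)) = range ((j:ℕ)+1) := by
              ext k; simp; have := j.isLt; omega
            rw [← Finset.sum_filter, hfil]
        _ = ∑ n ∈ range p, ∑ j : Fin p, (if n ≤ (j:ℕ) then lam j * D n else 0) :=
            Finset.sum_comm
        _ = ∑ n ∈ range p, D n * T n := by
            apply Finset.sum_congr rfl
            intro n _
            rw [hT, Finset.mul_sum]
            apply Finset.sum_congr rfl
            intro j _
            split <;> ring
    -- bound on tail sums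
    have hTb : ∀ n ∈ range p, (m / r) * Real.sqrt ((p - n : ℕ) : ℝ) ≤ T n := by
      intro n hn
      rw [Finset.mem_range] at hn
      set i : Fin p := ⟨p - n - 1, by omega⟩ with hi
      have h1 : f i = r * (T n / Real.sqrt ((p - n : ℕ) : ℝ)) := by
        show r * ∑ j, lam j * bvec p i j = _
        congr 1
        rw [sum_lam_bvec p lam i]
        have e1 : p - (i:ℕ) - 1 = n := by simp [hi]; omega
        have e2n : (i:ℕ) + 1 = p - n := by simp [hi]; omega
        have e2 : ((i:ℕ) : ℝ) + 1 = ((p - n : ℕ) : ℝ) := by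
          rw [← e2n]; push_cast; ring
        rw [e1, e2, hT]
      have hs : (0:ℝ) < Real.sqrt ((p - n : ℕ) : ℝ) := by
        apply Real.sqrt_pos.mpr
        have : 0 < p - n := by omega
        exact_mod_cast this
      have h2 := hml i
      rw [h1] at h2
      have h3 : m * Real.sqrt ((p - n : ℕ) : ℝ)
          ≤ r * (T n / Real.sqrt ((p - n : ℕ) : ℝ)) * Real.sqrt ((p - n : ℕ) : ℝ) :=
        mul_le_mul_of_nonneg_right h2 hs.le
      rw [mul_assoc, div_mul_cancel₀ _ hs.ne'] at h3
      rw [div_mul_eq_mul_div, div_le_iff₀ hr]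
      linarith
    calc m = (m / r) * r := by field_simp
      _ ≤ (m / r) * ∑ n ∈ range p, D n * Real.sqrt ((p - n : ℕ) : ℝ) :=
          mul_le_mul_of_nonneg_left hnormle (div_nonneg hm0 hr.le)
      _ = ∑ n ∈ range p, D n * ((m / r) * Real.sqrt ((p - n : ℕ) : ℝ)) := by
          rw [Finset.mul_sum]; apply Finset.sum_congr rfl; intro n _; ring
      _ ≤ ∑ n ∈ range p, D n * T n := by
          apply Finset.sum_le_sum
          intro n hn
          exact mul_le_mul_of_nonneg_left (hTb n hn) (hDnn n)
      _ = ∑ j, lam j * β j := habel.symm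
  -- membership element
  have hmem1 : m ∈ {v : ℝ | ∃ β : Fin p → ℝ, Monotone β ∧ (∀ i, 0 ≤ β i) ∧
      Real.sqrt (∑ i, (β i) ^ 2) = r ∧ v = ∑ i, lam i * β i} := by
    refine ⟨r • bvec p i₀, ?_, ?_, ?_, ?_⟩
    · intro j j' h
      simp only [Pi.smul_apply, smul_eq_mul]
      exact mul_le_mul_of_nonneg_left (bvec_mono p i₀ h) hr.le
    · intro j
      simp only [Pi.smul_apply, smul_eq_mul]
      exact mul_nonneg hr.le (bvec_nonneg p i₀ j)
    · have hsum : ∑ j, ((r • bvec p i₀) j) ^ 2 = r ^ 2 := by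
        calc ∑ j, ((r • bvec p i₀) j) ^ 2 = r ^ 2 * ∑ j, (bvec p i₀ j) ^ 2 := by
              rw [Finset.mul_sum]
              apply Finset.sum_congr rfl
              intro j _
              simp [Pi.smul_apply, smul_eq_mul, mul_pow]
          _ = r ^ 2 := by rw [bvec_sq_sum]; ring
      rw [hsum, Real.sqrt_sq hr.le]
    · rw [hval i₀, ← hi₀]
  -- part 2 lower bound
  have hlin : IsLinearMap ℝ (fun w : Fin p → ℝ => ∑ i, lam i * w i) := by
    constructor
    · intro x y
      rw [← Finset.sum_add_distrib]
      apply Finset.sum_congr rfl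
      intro i _
      simp [Pi.add_apply]
      ring
    · intro c x
      rw [Finset.smul_sum]
      apply Finset.sum_congr rfl
      intro i _
      simp [Pi.smul_apply, smul_eq_mul]
      ring
  have hconv : Convex ℝ {w : Fin p → ℝ | m ≤ ∑ i, lam i * w i} :=
    convex_halfSpace_ge hlin m
  have hsub : Set.range (fun i : Fin p => r • bvec p i)
      ⊆ {w : Fin p → ℝ | m ≤ ∑ i, lam i * w i} := by
    rintro w ⟨i, rfl⟩
    show m ≤ ∑ j, lam j * (r • bvec p i) j
    rw [hval i]
    exact hml i
  have hlb2 : ∀ v ∈ {v : ℝ | ∃ β ∈ convexHull ℝ (Set.range fun i : Fin p => r • bvec p i),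
      v = ∑ i, lam i * β i}, m ≤ v := by
    rintro v ⟨β, hβ, rfl⟩
    exact convexHull_min hsub hconv hβ
  have hmem2 : m ∈ {v : ℝ | ∃ β ∈ convexHull ℝ (Set.range fun i : Fin p => r • bvec p i),
      v = ∑ i, lam i * β i} := by
    refine ⟨r • bvec p i₀, subset_convexHull ℝ _ (Set.mem_range_self i₀), ?_⟩
    rw [hval i₀, ← hi₀]
  exact ⟨⟨hmem1, hlb1⟩, ⟨hmem2, hlb2⟩⟩
end
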